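/- arXiv:2503.19088 — 7 statements merged into one kernel-verified Lean document; each statement's English description precedes it below -/
import Mathlib

section
/- Let G be a simple graph and u, w ∈ V(G) with w ∉ [u]_E. Then w has only finitely many neighbors in [u]_E. Consequently, every edge of the quotient graph G/[u]_E has only finitely many preimage edges in G under the quotient projection. -/
open SimpleGraph

/-- A ray in a simple graph: an injective sequence of successively adjacent vertices. -/
structure GraphRay {V : Type*} (G : SimpleGraph V) where
  toFun : ℕ → V
  injective : Function.Injective toFun
  adj : ∀ n, G.Adj (toFun n) (toFun (n + 1))

/-- `u` and `v` are connected by a walk of `G` avoiding the vertex set `F`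
(i.e. they lie in the same connected component of `G − F`). -/
def ReachAvoiding {V : Type*} (G : SimpleGraph V) (F : Set V) (u v : V) : Prop :=
  ∃ w : G.Walk u v, ∀ x ∈ w.support, x ∉ F

/-- `r` and `r'` have tails lying in the same connected component of `G − F`
(deletion of the vertex set `F`). -/
def TailsConnected {V : Type*} (G : SimpleGraph V) (F : Set V) (r r' : ℕ → V) : Prop :=
  ∃ k k', (∀ n, k ≤ n → r n ∉ F) ∧ (∀ n, k' ≤ n → r' n ∉ F) ∧
    ReachAvoiding G F (r k) (r' k')

/-- `r` and `r'` have tails lying in the same connected component of `G − F`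
(deletion of the edge set `F`). -/
def EdgeTailsConnected {V : Type*} (G : SimpleGraph V) (F : Set (Sym2 V)) (r r' : ℕ → V) : Prop :=
  ∃ k k', (∀ n, k ≤ n → s(r n, r (n + 1)) ∉ F) ∧ (∀ n, k' ≤ n → s(r' n, r' (n + 1)) ∉ F) ∧
    (G.deleteEdges F).Reachable (r k) (r' k')

/-- `v` dominates the ray `r`: for every finite vertex set `F` not containing `v`,
`v` and some tail of `r` lie in the same connected component of `G − F`. -/
def Dominates {V : Type*} (G : SimpleGraph V) (v : V) (r : ℕ → V) : Prop :=
  ∀ F : Finset V, v ∉ F →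
    ∃ k, (∀ n, k ≤ n → r n ∉ (F : Set V)) ∧ ReachAvoiding G (F : Set V) v (r k)

/-- A vertex is timid if it dominates no ray. -/
def Timid {V : Type*} (G : SimpleGraph V) (v : V) : Prop :=
  ∀ r : GraphRay G, ¬ Dominates G v r.toFun

/-- `t(G)`, the set of timid vertices of `G`. -/
def timidSet {V : Type*} (G : SimpleGraph V) : Set V := {v | Timid G v}

/-- Edge-equivalence of rays: no finite set of edges of `G` separates their tails. -/
def EdgeEquiv {V : Type*} (G : SimpleGraph V) (r r' : GraphRay G) : Prop :=
  ∀ F : Finset (Sym2 V), (F : Set (Sym2 V)) ⊆ G.edgeSet →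
    EdgeTailsConnected G (F : Set (Sym2 V)) r.toFun r'.toFun

/-- `U`-equivalence of rays: no finite subset of `U` separates their tails. -/
def UEquiv {V : Type*} (G : SimpleGraph V) (U : Set V) (r r' : GraphRay G) : Prop :=
  ∀ F : Finset V, (F : Set V) ⊆ U → TailsConnected G (F : Set V) r.toFun r'.toFun

/-- The `U`-end space: the quotient of the rays of `G` by `U`-equivalence. -/
def OmegaU {V : Type*} (G : SimpleGraph V) (U : Set V) := Quot (UEquiv G U)

/-- The basic open subset `Ω_U(F, ε)` of the `U`-end space. -/
def uBasic {V : Type*} (G : SimpleGraph V) (U : Set V) (F : Finset V) (ε : OmegaU G U) :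
    Set (OmegaU G U) :=
  {ξ | ∃ r r' : GraphRay G, Quot.mk (UEquiv G U) r = ε ∧ Quot.mk (UEquiv G U) r' = ξ ∧
    TailsConnected G (F : Set V) r.toFun r'.toFun}

instance {V : Type*} (G : SimpleGraph V) (U : Set V) : TopologicalSpace (OmegaU G U) :=
  TopologicalSpace.generateFrom
    {S | ∃ F : Finset V, (F : Set V) ⊆ U ∧ ∃ ε : OmegaU G U, S = uBasic G U F ε}

/-- The edge-end space: the quotient of the rays of `G` by edge-equivalence. -/
def OmegaE {V : Type*} (G : SimpleGraph V) := Quot (EdgeEquiv G)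

/-- The basic open subset `Ω_E(F, ε)` of the edge-end space, for a finite edge set `F`. -/
def eBasic {V : Type*} (G : SimpleGraph V) (F : Finset (Sym2 V)) (ε : OmegaE G) :
    Set (OmegaE G) :=
  {ξ | ∃ r r' : GraphRay G, Quot.mk (EdgeEquiv G) r = ε ∧ Quot.mk (EdgeEquiv G) r' = ξ ∧
    EdgeTailsConnected G (F : Set (Sym2 V)) r.toFun r'.toFun}

instance {V : Type*} (G : SimpleGraph V) : TopologicalSpace (OmegaE G) :=
  TopologicalSpace.generateFrom
    {S | ∃ F : Finset (Sym2 V), (F : Set (Sym2 V)) ⊆ G.edgeSet ∧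
      ∃ ε : OmegaE G, S = eBasic G F ε}
/-- `u ∼_A v`: for every finite set `F ⊆ A` of edges, `u` and `v` lie in the same
connected component of `G − F`. -/
def EdgeSetEquiv {V : Type*} (G : SimpleGraph V) (A : Set (Sym2 V)) (u v : V) : Prop :=
  ∀ F : Finset (Sym2 V), (F : Set (Sym2 V)) ⊆ A → (G.deleteEdges (F : Set (Sym2 V))).Reachable u v

/-- `u ∼_E v`: no finite set of edges of `G` separates `u` from `v`. -/
def VertexEdgeEquiv {V : Type*} (G : SimpleGraph V) (u v : V) : Prop :=
  EdgeSetEquiv G G.edgeSet u v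

/-- `[u]_E`, the `∼_E`-class of `u`. -/
def eClass {V : Type*} (G : SimpleGraph V) (u : V) : Set V := {v | VertexEdgeEquiv G u v}

/-- `E_t(G)`: the set of edges of `G` having at least one timid endpoint. -/
def timidEdges {V : Type*} (G : SimpleGraph V) : Set (Sym2 V) :=
  {e | e ∈ G.edgeSet ∧ ∃ v ∈ e, Timid G v}

/-- The quotient graph `G/[u]_E`: the class `[u]_E` is collapsed to the single
vertex `none`; the remaining vertices keep their adjacencies, and `none` is adjacent
to `w` iff some member of `[u]_E` is adjacent to `w` in `G`. -/
def quotGraph {V : Type*} (G : SimpleGraph V) (u : V) :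
    SimpleGraph (Option {w : V // w ∉ eClass G u}) where
  Adj x y :=
    match x, y with
    | some a, some b => G.Adj a.1 b.1
    | some a, none => ∃ v ∈ eClass G u, G.Adj v a.1
    | none, some b => ∃ v ∈ eClass G u, G.Adj v b.1
    | none, none => False
  symm := by
    constructor
    rintro (_ | a) (_ | b) h
    · exact h
    · exact h
    · exact h
    · exact h.symm
  loopless := by
    constructor
    rintro (_ | a) h
    · exact h
    · exact G.irrefl h

open Classical in
/-- The quotient projection `V(G) → V(G/[u]_E)`. -/
noncomputable def quotProj {V : Type*} (G : SimpleGraph V) (u : V) : V → Option {w : V // w ∉ eClass G u} :=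
  fun v => if h : v ∈ eClass G u then none else some ⟨v, h⟩

lemma quotProj_eq_none' {V : Type*} (G : SimpleGraph V) (u : V) {x : V} :
    quotProj G u x = none ↔ x ∈ eClass G u := by
  by_cases h : x ∈ eClass G u <;> simp [quotProj, h]

lemma quotProj_eq_some' {V : Type*} (G : SimpleGraph V) (u : V) {x : V}
    {a : {w : V // w ∉ eClass G u}} : quotProj G u x = some a ↔ x = a.1 := by
  by_cases h : x ∈ eClass G u
  · simp only [quotProj, dif_pos h]
    constructor
    · intro hc; exact absurd hc (by simp)
    · rintro rfl; exact absurd h a.2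
  · simp [quotProj, h, Subtype.ext_iff]

lemma finitely_many_neighbors_part1 {V : Type*} (G : SimpleGraph V) (u : V) (w : V)
    (hw : w ∉ eClass G u) : {x | x ∈ eClass G u ∧ G.Adj w x}.Finite := by
  simp only [eClass, VertexEdgeEquiv, EdgeSetEquiv, Set.mem_setOf_eq] at hw
  push_neg at hw
  obtain ⟨F, hFsub, hFnr⟩ := hw
  have key : ∀ x, x ∈ {x | x ∈ eClass G u ∧ G.Adj w x} → s(w, x) ∈ (F : Set (Sym2 V)) := by
    rintro x ⟨hx, hadj⟩
    by_contra hne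
    refine hFnr ((hx F hFsub).trans ?_)
    exact SimpleGraph.Adj.reachable (by
      rw [SimpleGraph.deleteEdges_adj]
      exact ⟨hadj.symm, by rwa [Sym2.eq_swap]⟩)
  apply Set.Finite.of_finite_image (f := fun x => s(w, x))
  · exact F.finite_toSet.subset (by rintro e ⟨x, hx, rfl⟩; exact key x hx)
  · intro x hx y hy h
    exact Sym2.congr_right.mp h

/-- If `w ∉ [u]_E`, then `w` has only finitely many neighbours inside
`[u]_E`; consequently, every edge of the quotient graph `G/[u]_E` has only finitely many
preimage edges in `G` under the quotient projection. -/
theorem finitely_many_neighbors_in_eClass {V : Type*} (G : SimpleGraph V) (u : V) :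
    (∀ w : V, w ∉ eClass G u → {x | x ∈ eClass G u ∧ G.Adj w x}.Finite) ∧
    (∀ e ∈ (quotGraph G u).edgeSet,
      {e' | e' ∈ G.edgeSet ∧ Sym2.map (quotProj G u) e' = e}.Finite) := by
  refine ⟨fun w hw => finitely_many_neighbors_part1 G u w hw, ?_⟩
  intro e he
  induction e using Sym2.ind with
  | _ p q =>
    rw [SimpleGraph.mem_edgeSet] at he
    match p, q, he with
    | some a, some b, he =>
      apply Set.Finite.subset (Set.finite_singleton s(a.1, b.1))
      rintro e' ⟨he', hmap⟩
      induction e' using Sym2.ind with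
      | _ x y =>
        rw [SimpleGraph.mem_edgeSet] at he'
        simp only [Sym2.map_pair_eq, Sym2.eq_iff] at hmap
        rcases hmap with ⟨hx, hy⟩ | ⟨hx, hy⟩ <;>
          rw [quotProj_eq_some'] at hx hy <;>
          simp [Set.mem_singleton_iff, hx, hy, Sym2.eq_swap]
    | some a, none, he =>
      apply Set.Finite.subset
        ((finitely_many_neighbors_part1 G u a.1 a.2).image (fun x => s(a.1, x)))
      rintro e' ⟨he', hmap⟩
      induction e' using Sym2.ind with
      | _ x y =>
        rw [SimpleGraph.mem_edgeSet] at he'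
        simp only [Sym2.map_pair_eq, Sym2.eq_iff] at hmap
        rcases hmap with ⟨hx, hy⟩ | ⟨hx, hy⟩
        · rw [quotProj_eq_some'] at hx
          rw [quotProj_eq_none'] at hy
          subst hx
          exact ⟨y, ⟨hy, he'⟩, rfl⟩
        · rw [quotProj_eq_none'] at hx
          rw [quotProj_eq_some'] at hy
          subst hy
          exact ⟨x, ⟨hx, he'.symm⟩, Sym2.eq_swap⟩
    | none, some b, he =>
      apply Set.Finite.subset
        ((finitely_many_neighbors_part1 G u b.1 b.2).image (fun x => s(b.1, x)))
      rintro e' ⟨he', hmap⟩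
      induction e' using Sym2.ind with
      | _ x y =>
        rw [SimpleGraph.mem_edgeSet] at he'
        simp only [Sym2.map_pair_eq, Sym2.eq_iff] at hmap
        rcases hmap with ⟨hx, hy⟩ | ⟨hx, hy⟩
        · rw [quotProj_eq_none'] at hx
          rw [quotProj_eq_some'] at hy
          subst hy
          exact ⟨x, ⟨hx, he'.symm⟩, Sym2.eq_swap⟩
        · rw [quotProj_eq_some'] at hx
          rw [quotProj_eq_none'] at hy
          subst hx
          exact ⟨y, ⟨hy, he'⟩, rfl⟩
end

section
/- Let G be a simple graph, u ∈ V(G), and w ∈ V(G) ∖ [u]_E. Then w is timid in G if and only if w (viewed as a vertex of the quotient) is timid in G/[u]_E. -/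
open SimpleGraph

namespace TimidQuotAux

open SimpleGraph Walk

variable {V : Type*} {G : SimpleGraph V}

/-- The walk along a ray from index `i`, of length `l`. -/
def raySeg (r : GraphRay G) (i : ℕ) : (l : ℕ) → G.Walk (r.toFun i) (r.toFun (i + l))
  | 0 => Walk.nil
  | l + 1 => (raySeg r i l).concat (r.adj (i + l))

lemma raySeg_support (r : GraphRay G) (i l : ℕ) :
    ∀ x ∈ (raySeg r i l).support, ∃ n, i ≤ n ∧ n ≤ i + l ∧ x = r.toFun n := by
  induction l with
  | zero =>
    intro x hx
    simp only [raySeg, Walk.support_nil, List.mem_singleton] at hx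
    exact ⟨i, le_rfl, le_rfl, by simpa using hx⟩
  | succ l ih =>
    intro x hx
    rw [raySeg, Walk.support_concat, List.mem_append] at hx
    rcases hx with h1 | h1
    · obtain ⟨n, hn1, hn2, rfl⟩ := ih x h1
      exact ⟨n, hn1, hn2.trans (by omega), rfl⟩
    · exact ⟨i + (l + 1), by omega, le_rfl, by simpa using h1⟩


lemma reach_extend {F : Set V} {v : V} (r : GraphRay G) {k m : ℕ} (hkm : k ≤ m)
    (h : ReachAvoiding G F v (r.toFun k)) (htail : ∀ n, k ≤ n → r.toFun n ∉ F) :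
    ReachAvoiding G F v (r.toFun m) := by
  obtain ⟨W, hW⟩ := h
  obtain ⟨l, rfl⟩ := Nat.exists_eq_add_of_le hkm
  refine ⟨W.append (raySeg r k l), ?_⟩
  intro x hx
  rw [Walk.support_append] at hx
  rcases List.mem_append.mp hx with h1 | h1
  · exact hW x h1
  · obtain ⟨n, hn1, _, rfl⟩ := raySeg_support r k l x (List.mem_of_mem_tail h1)
    exact htail n hn1

lemma dominates_tail {v : V} (r : GraphRay G) (m : ℕ)
    (h : Dominates G v r.toFun) : Dominates G v (fun n => r.toFun (n + m)) := by
  intro F hvF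
  obtain ⟨k, htail, hreach⟩ := h F hvF
  exact ⟨k, fun n hn => htail (n + m) (hn.trans (Nat.le_add_right n m)),
    reach_extend r (Nat.le_add_right k m) hreach htail⟩

open Classical in
/-- The finite set of endpoints of a finite set of (potential) edges. -/
noncomputable def endpts (D : Finset (Sym2 V)) : Finset V :=
  D.biUnion fun e => {e.out.1, e.out.2}

lemma mem_endpts {D : Finset (Sym2 V)} {e : Sym2 V} (he : e ∈ D) {x : V} (hx : x ∈ e) :
    x ∈ endpts D := by
  classical
  refine Finset.mem_biUnion.mpr ⟨e, he, ?_⟩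
  have hrep : e = s(e.out.1, e.out.2) := by
    conv_lhs => rw [← e.out_eq]
  rw [hrep, Sym2.mem_iff] at hx
  rcases hx with rfl | rfl
  · exact Finset.mem_insert_self _ _
  · exact Finset.mem_insert_of_mem (Finset.mem_singleton_self _)

lemma walk_to_deleteEdges {D : Finset (Sym2 V)} {z a b : V} (W : G.Walk a b)
    (hsupp : ∀ x ∈ W.support, x = z ∨ x ∉ endpts D) :
    ∃ W' : (G.deleteEdges (D : Set (Sym2 V))).Walk a b, W'.support = W.support := by
  have hnotD : ∀ x y, s(x, y) ∈ W.edges → s(x, y) ∉ (D : Set (Sym2 V)) := by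
    intro x y he heD
    have hxs := W.fst_mem_support_of_mem_edges he
    have hys := W.snd_mem_support_of_mem_edges he
    have hadj : G.Adj x y := W.adj_of_mem_edges he
    have heD' : s(x, y) ∈ D := heD
    rcases hsupp x hxs with rfl | hx'
    · rcases hsupp y hys with rfl | hy'
      · exact hadj.ne rfl
      · exact hy' (mem_endpts heD' (Sym2.mem_mk_right x y))
    · exact hx' (mem_endpts heD' (Sym2.mem_mk_left x y))
  have h : ∀ e ∈ W.edges, e ∈ (G.deleteEdges (D : Set (Sym2 V))).edgeSet := by
    intro e
    induction e using Sym2.ind with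
    | _ x y =>
      intro he
      rw [edgeSet_deleteEdges]
      exact ⟨W.edges_subset_edgeSet he, hnotD x y he⟩
  exact ⟨W.transfer _ h, W.support_transfer h⟩

lemma quot_walk_of_walk {u : V} : ∀ {a b : V} (W : G.Walk a b),
    (∀ x ∈ W.support, x ∉ eClass G u) → ∀ (ha : a ∉ eClass G u) (hb : b ∉ eClass G u),
    ∃ W' : (quotGraph G u).Walk (some ⟨a, ha⟩) (some ⟨b, hb⟩),
      ∀ x ∈ W'.support, ∃ y, ∃ hy : y ∉ eClass G u, x = some ⟨y, hy⟩ ∧ y ∈ W.support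
  | a, _, Walk.nil, _, ha, hb => ⟨Walk.nil, by
      intro x hx
      simp only [Walk.support_nil, List.mem_singleton] at hx
      exact ⟨a, ha, by simpa using hx, by simp⟩⟩
  | a, b, @Walk.cons _ _ _ c _ h p, hsupp, ha, hb => by
      have hc : c ∉ eClass G u := hsupp c (by
        rw [Walk.support_cons]; exact List.mem_cons_of_mem _ p.start_mem_support)
      obtain ⟨W', hW'⟩ := quot_walk_of_walk p
        (fun x hx => hsupp x (by rw [Walk.support_cons]; exact List.mem_cons_of_mem _ hx)) hc hb
      refine ⟨Walk.cons (show (quotGraph G u).Adj (some ⟨a, ha⟩) (some ⟨c, hc⟩) from h) W', ?_⟩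
      intro x hx
      rw [Walk.support_cons] at hx
      rcases List.mem_cons.mp hx with hx1 | hx1
      · exact ⟨a, ha, hx1, Walk.start_mem_support _⟩
      · obtain ⟨y, hy, rfl, hys⟩ := hW' x hx1
        exact ⟨y, hy, rfl, by rw [Walk.support_cons]; exact List.mem_cons_of_mem _ hys⟩

lemma walk_of_quot_walk {u : V} {o o' : Option {w : V // w ∉ eClass G u}}
    (W' : (quotGraph G u).Walk o o') :
    (∀ x ∈ W'.support, x ≠ none) →
    ∀ {a b : {w : V // w ∉ eClass G u}}, o = some a → o' = some b →
    ∃ W : G.Walk a.1 b.1, ∀ x ∈ W.support, ∃ h : x ∉ eClass G u, some ⟨x, h⟩ ∈ W'.support := by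
  induction W' with
  | nil =>
    intro _ a b ho ho'
    rw [ho] at ho'
    obtain rfl : a = b := by injection ho'
    subst ho
    refine ⟨Walk.nil, ?_⟩
    intro x hx
    simp only [Walk.support_nil, List.mem_singleton] at hx
    subst hx
    exact ⟨a.2, by simp⟩
  | @cons o c o'' h p ih =>
    intro hn a b ho ho'
    subst ho; subst ho'
    have hcs : c ∈ (Walk.cons h p).support := by
      rw [Walk.support_cons]; exact List.mem_cons_of_mem _ p.start_mem_support
    obtain ⟨c', rfl⟩ : ∃ c', c = some c' := by
      cases c with
      | none => exact absurd rfl (hn none hcs)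
      | some c' => exact ⟨c', rfl⟩
    obtain ⟨W, hW⟩ := ih
      (fun x hx => hn x (by rw [Walk.support_cons]; exact List.mem_cons_of_mem _ hx)) rfl rfl
    refine ⟨Walk.cons (show G.Adj a.1 c'.1 from h) W, ?_⟩
    intro x hx
    rw [Walk.support_cons] at hx
    rcases List.mem_cons.mp hx with rfl | hx1
    · exact ⟨a.2, by rw [Walk.support_cons]; exact List.mem_cons_self⟩
    · obtain ⟨hx', hmem⟩ := hW x hx1
      exact ⟨hx', by rw [Walk.support_cons]; exact List.mem_cons_of_mem _ hmem⟩

end TimidQuotAux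

/-- For `w ∉ [u]_E`, the vertex `w` is timid in `G` if and only if it is
timid (as a vertex of the quotient) in `G/[u]_E`. -/
theorem timid_iff_timid_quotGraph {V : Type*} (G : SimpleGraph V) (u w : V)
    (hw : w ∉ eClass G u) :
    Timid G w ↔ Timid (quotGraph G u) (some ⟨w, hw⟩) := by
  classical
  open TimidQuotAux in
  constructor
  · -- `Timid G w → Timid (G/[u]_E) w` : from a dominated ray in the quotient, build one in `G`.
    intro hT ρ hdom
    -- a tail of ρ avoids `none`
    have hM : ∃ M, ∀ n, M ≤ n → ρ.toFun n ≠ none := by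
      by_cases h : ∃ n₀, ρ.toFun n₀ = none
      · obtain ⟨n₀, hn₀⟩ := h
        refine ⟨n₀ + 1, fun n hn he => ?_⟩
        have := ρ.injective (he.trans hn₀.symm)
        omega
      · push_neg at h
        exact ⟨0, fun n _ => h n⟩
    obtain ⟨M, hM⟩ := hM
    have hdom' := dominates_tail ρ M hdom
    have hsome : ∀ n, (ρ.toFun (n + M)).isSome := fun n =>
      Option.isSome_iff_ne_none.mpr (hM (n + M) (Nat.le_add_left M n))
    set τ : ℕ → {x : V // x ∉ eClass G u} := fun n => (ρ.toFun (n + M)).get (hsome n) with hτ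
    have heq : ∀ n, ρ.toFun (n + M) = some (τ n) := fun n => (Option.some_get (hsome n)).symm
    have hτinj : Function.Injective τ := by
      intro x y hxy
      have : ρ.toFun (x + M) = ρ.toFun (y + M) := by rw [heq x, heq y, hxy]
      have := ρ.injective this
      omega
    set σ : GraphRay G :=
      { toFun := fun n => (τ n).1
        injective := fun x y hxy => hτinj (Subtype.ext hxy)
        adj := fun n => by
          have h := ρ.adj (n + M)
          rw [show n + M + 1 = n + 1 + M from by omega] at h
          rw [heq n, heq (n + 1)] at h
          exact h } with hσ
    refine hT σ ?_
    intro F hwF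
    set F' : Finset (Option {x : V // x ∉ eClass G u}) :=
      insert none (F.image (quotProj G u)) with hF'
    have hwF' : (some ⟨w, hw⟩ : Option {x : V // x ∉ eClass G u}) ∉ F' := by
      intro hmem
      rcases Finset.mem_insert.mp hmem with h | h
      · exact nomatch h
      · obtain ⟨v, hv, hveq⟩ := Finset.mem_image.mp h
        by_cases hvc : v ∈ eClass G u
        · rw [show quotProj G u v = none from dif_pos hvc] at hveq
          exact nomatch hveq
        · rw [show quotProj G u v = some ⟨v, hvc⟩ from dif_neg hvc] at hveq
          have : v = w := congrArg (fun o => o.elim w Subtype.val) hveq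
          exact hwF (this ▸ hv)
    obtain ⟨k, htail', hreach'⟩ := hdom' F' hwF'
    have hreach2 : ReachAvoiding (quotGraph G u) (F' : Set (Option {x : V // x ∉ eClass G u}))
        (some ⟨w, hw⟩) (some (τ k)) := by
      rw [← heq k]; exact hreach'
    obtain ⟨W', hW'supp⟩ := hreach2
    have hnonone : ∀ x ∈ W'.support, x ≠ none := by
      intro x hx hxn
      exact hW'supp x hx (hxn ▸ Finset.mem_insert_self _ _)
    obtain ⟨W, hWsupp⟩ := walk_of_quot_walk W' hnonone rfl rfl
    refine ⟨k, ?_, ⟨W, ?_⟩⟩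
    · intro n hn hmem
      have h2 : quotProj G u (σ.toFun n) ∈ (F.image (quotProj G u)) :=
        Finset.mem_image_of_mem _ hmem
      have h3 : quotProj G u (σ.toFun n) = some (τ n) := dif_neg (τ n).2
      rw [h3] at h2
      have h4 : ρ.toFun (n + M) ∈ F' := by rw [heq n]; exact Finset.mem_insert_of_mem h2
      exact htail' n hn h4
    · intro x hx hxF
      obtain ⟨hxc, hxmem⟩ := hWsupp x hx
      refine hW'supp _ hxmem ?_
      have : quotProj G u x = some ⟨x, hxc⟩ := dif_neg hxc
      exact Finset.mem_insert_of_mem (this ▸ Finset.mem_image_of_mem _ hxF)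
  · -- `Timid (G/[u]_E) w → Timid G w`
    intro hT r hdom
    have hw' : ¬ EdgeSetEquiv G G.edgeSet u w := hw
    -- Step 1: only finitely many vertices of `r` lie in `[u]_E`
    have hA : ∃ N, ∀ n, N ≤ n → r.toFun n ∉ eClass G u := by
      by_contra hc
      push_neg at hc
      refine hw' ?_
      intro D hD
      obtain ⟨k, htail, hreach⟩ := hdom ((endpts D).erase w) (by simp)
      obtain ⟨n, hkn, hn⟩ := hc k
      obtain ⟨W₂, hW₂⟩ := reach_extend r hkn hreach htail
      obtain ⟨W₃, _⟩ := walk_to_deleteEdges (z := w) W₂ (fun x hx => by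
        by_cases hxw : x = w
        · exact Or.inl hxw
        · exact Or.inr fun hxe => hW₂ x hx
            (Finset.mem_coe.mpr (Finset.mem_erase.mpr ⟨hxw, hxe⟩)))
      have h1 : (G.deleteEdges (D : Set (Sym2 V))).Reachable w (r.toFun n) := ⟨W₃⟩
      have h2 : (G.deleteEdges (D : Set (Sym2 V))).Reachable u (r.toFun n) :=
        (hn : VertexEdgeEquiv G u (r.toFun n)) D hD
      exact h2.trans h1.symm
    obtain ⟨N, hN⟩ := hA
    -- Step 2: a finite edge cut `D` separating `w` from `[u]_E`
    have hsep : ∃ D : Finset (Sym2 V), (D : Set (Sym2 V)) ⊆ G.edgeSet ∧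
        ¬ (G.deleteEdges (D : Set (Sym2 V))).Reachable u w := by
      by_contra hcon
      push_neg at hcon
      exact hw' fun D hD => hcon D hD
    obtain ⟨D, hD, hDsep⟩ := hsep
    -- the projected ray
    set σ : GraphRay (quotGraph G u) :=
      { toFun := fun n => some ⟨r.toFun (n + N), hN _ (Nat.le_add_left N n)⟩
        injective := fun x y hxy => by
          have : r.toFun (x + N) = r.toFun (y + N) := by
            have := Option.some_injective _ hxy
            exact congrArg Subtype.val this
          have := r.injective this
          omega
        adj := fun n => by
          have h := r.adj (n + N)
          rw [show n + N + 1 = n + 1 + N from by omega] at h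
          exact h } with hσ
    refine hT σ ?_
    intro F' hwF'
    set F : Finset V := F'.filterMap (fun o => o.map Subtype.val)
      (by
        rintro (_ | a) (_ | a') b hb hb' <;>
          simp only [Option.map_none, Option.map_some, Option.mem_def,
            Option.some_inj, reduceCtorEq] at hb hb'
        rw [show a = a' from Subtype.ext (hb.trans hb'.symm)]) with hF
    have hmemF : ∀ (x : V) (hx : x ∉ eClass G u),
        x ∈ F ↔ (some ⟨x, hx⟩ : Option {y : V // y ∉ eClass G u}) ∈ F' := by
      intro x hx
      rw [hF, Finset.mem_filterMap]
      constructor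
      · rintro ⟨(_ | a), ha, hmap⟩
        · simp at hmap
        · simp only [Option.map_some, Option.mem_def, Option.some_inj] at hmap
          have : a = ⟨x, hx⟩ := Subtype.ext hmap
          exact this ▸ ha
      · intro h
        exact ⟨some ⟨x, hx⟩, h, rfl⟩
    have hwFF : w ∉ F := fun hmem => hwF' ((hmemF w hw).mp hmem)
    set F₂ : Finset V := F ∪ (endpts D).erase w with hF₂
    have hwF₂ : w ∉ F₂ := by
      rw [hF₂, Finset.mem_union]
      push_neg
      exact ⟨hwFF, by simp⟩
    obtain ⟨k, htail, hreach⟩ := hdom F₂ hwF₂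
    set m : ℕ := max k N with hm
    obtain ⟨W, hWsupp⟩ := reach_extend r (le_max_left k N) hreach htail
    -- the walk `W` avoids the edges of `D`, hence avoids `[u]_E` entirely
    obtain ⟨W₃, hW₃supp⟩ := walk_to_deleteEdges (z := w) W (fun x hx => by
      by_cases hxw : x = w
      · exact Or.inl hxw
      · exact Or.inr fun hxe => hWsupp x hx (Finset.mem_coe.mpr
          (Finset.mem_union_right _ (Finset.mem_erase.mpr ⟨hxw, hxe⟩))))
    have hclassfree : ∀ x ∈ W.support, x ∉ eClass G u := by
      intro x hx hxc
      have hx3 : x ∈ W₃.support := hW₃supp ▸ hx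
      have h1 : (G.deleteEdges (D : Set (Sym2 V))).Reachable w x := ⟨W₃.takeUntil x hx3⟩
      have h2 : (G.deleteEdges (D : Set (Sym2 V))).Reachable u x :=
        (hxc : VertexEdgeEquiv G u x) D hD
      exact hDsep (h2.trans h1.symm)
    have hmN : N ≤ m := le_max_right k N
    obtain ⟨W', hW'supp⟩ := quot_walk_of_walk W hclassfree hw (hN m hmN)
    set K : ℕ := m - N with hK
    have hKN : K + N = m := Nat.sub_add_cancel hmN
    have hσK : σ.toFun K = some ⟨r.toFun m, hN m hmN⟩ := by
      show some (⟨r.toFun (K + N), hN _ (Nat.le_add_left N K)⟩ : {x : V // x ∉ eClass G u}) = _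
      exact congrArg some (Subtype.ext (congrArg r.toFun hKN))
    refine ⟨K, ?_, ?_⟩
    · intro n hn hmem
      have hn' : k ≤ n + N := by omega
      have h1 : r.toFun (n + N) ∉ (F₂ : Set V) := htail (n + N) hn'
      have h2 : r.toFun (n + N) ∈ F := (hmemF _ _).mpr hmem
      exact h1 (Finset.mem_coe.mpr (Finset.mem_union_left _ h2))
    · rw [hσK]
      refine ⟨W', ?_⟩
      intro x hx hxF'
      obtain ⟨y, hy, rfl, hymem⟩ := hW'supp x hx
      have hyF : y ∈ F := (hmemF y hy).mpr hxF'
      exact hWsupp y hymem (Finset.mem_coe.mpr (Finset.mem_union_left _ hyF))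
end

section
/- Let G be a simple graph. Every ray of H(G) is edge-equivalent in H(G) to a ray all of whose vertices lie in V(G); indeed, every ray in H(G) meets infinitely many vertices of some ray of G. -/
open SimpleGraph

/-- The subdivision of `G`: every edge `{u, v}` of `G` is replaced by a new vertex
adjacent exactly to `u` and `v`. -/
def subdivision {V : Type*} (G : SimpleGraph V) : SimpleGraph (V ⊕ G.edgeSet) where
  Adj x y :=
    match x, y with
    | Sum.inl v, Sum.inr e => v ∈ (e : Sym2 V)
    | Sum.inr e, Sum.inl v => v ∈ (e : Sym2 V)
    | _, _ => False
  symm := by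
    constructor
    rintro (v | e) (w | f) h
    · exact h
    · exact h
    · exact h
    · exact h
  loopless := by constructor; rintro (v | e) h <;> exact h

/-- The set of edges of `G` neither of whose endpoints is timid. -/
def nonTimidEdges {V : Type*} (G : SimpleGraph V) : Set (Sym2 V) :=
  {e | e ∈ G.edgeSet ∧ ∀ v ∈ e, ¬ Timid G v}

/-- The graph `H(G)`: for each edge `e` of `G` with no timid endpoint, countably many
new vertices are added, each adjacent exactly to the two endpoints of `e`.
`G` is the induced subgraph on the `Sum.inl` vertices. -/
def Hgraph {V : Type*} (G : SimpleGraph V) : SimpleGraph (V ⊕ (↥(nonTimidEdges G) × ℕ)) where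
  Adj x y :=
    match x, y with
    | Sum.inl a, Sum.inl b => G.Adj a b
    | Sum.inl a, Sum.inr p => a ∈ (p.1 : Sym2 V)
    | Sum.inr p, Sum.inl a => a ∈ (p.1 : Sym2 V)
    | Sum.inr _, Sum.inr _ => False
  symm := by
    constructor
    rintro (a | p) (b | q) h
    · exact h.symm
    · exact h
    · exact h
    · exact h
  loopless := by
    constructor
    rintro (a | p) h
    · exact G.loopless.irrefl a h
    · exact h

/-- A ray of `G`, viewed as a ray of `H(G)` under the identification of `G` with an
induced subgraph of `H(G)`. -/
def liftRay {V : Type*} (G : SimpleGraph V) (r : GraphRay G) : GraphRay (Hgraph G) where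
  toFun := fun n => Sum.inl (r.toFun n)
  injective := fun a b h => r.injective (Sum.inl.inj h)
  adj := fun n => r.adj n


/-- The edges of a ray are pairwise distinct. -/
lemma ray_edge_injective {V : Type*} {G : SimpleGraph V} (t : GraphRay G) :
    Function.Injective (fun n => s(t.toFun n, t.toFun (n + 1))) := by
  intro n m h
  simp only [Sym2.eq, Sym2.rel_iff', Prod.mk.injEq, Prod.swap_prod_mk] at h
  rcases h with ⟨h1, _⟩ | ⟨h1, h2⟩
  · exact t.injective h1
  · have e1 := t.injective h1
    have e2 := t.injective h2
    omega

/-- Every ray of `H(G)` meets infinitely many vertices of some ray of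
`G`, and in particular is edge-equivalent in `H(G)` to a ray all of whose vertices lie in
`V(G)`. -/
theorem every_Hgraph_ray_edgeEquiv_to_Graph_ray {V : Type*} (G : SimpleGraph V)
    (s : GraphRay (Hgraph G)) :
    ∃ r : GraphRay G,
      {n : ℕ | ∃ m : ℕ, s.toFun m = Sum.inl (r.toFun n)}.Infinite ∧
      EdgeEquiv (Hgraph G) s (liftRay G r) := by
  classical
  set p : ℕ → Prop := fun m => ∃ a, s.toFun m = Sum.inl a with hp
  have step : ∀ m, ¬ p m → p (m + 1) := by
    intro m hm
    cases hsm : s.toFun m with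
    | inl a => exact absurd ⟨a, hsm⟩ hm
    | inr q =>
      cases hsm1 : s.toFun (m + 1) with
      | inl a => exact ⟨a, hsm1⟩
      | inr q' =>
        have hadj := s.adj m
        rw [hsm, hsm1] at hadj
        exact hadj.elim
  let f : ℕ → ℕ := fun n => n.rec (if p 0 then 0 else 1)
    (fun _ fn => if p (fn + 1) then fn + 1 else fn + 2)
  have hf0 : f 0 = if p 0 then 0 else 1 := rfl
  have hfs : ∀ n, f (n + 1) = if p (f n + 1) then f n + 1 else f n + 2 := fun n => rfl
  have hpf : ∀ n, p (f n) := by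
    intro n
    induction n with
    | zero =>
      rw [hf0]
      by_cases h : p 0
      · simpa [h] using h
      · simpa [h] using step 0 h
    | succ n ih =>
      rw [hfs]
      by_cases h : p (f n + 1)
      · simpa [h] using h
      · simpa [h] using step (f n + 1) h
  have hfsucc : ∀ n, f (n + 1) = f n + 1 ∨ (f (n + 1) = f n + 2 ∧ ¬ p (f n + 1)) := by
    intro n
    rw [hfs]
    by_cases h : p (f n + 1)
    · left; simp [h]
    · right; simp [h]
  have hfmono : StrictMono f := by
    apply strictMono_nat_of_lt_succ
    intro n
    rcases hfsucc n with h | ⟨h, _⟩ <;> omega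
  have hfge : ∀ n, n ≤ f n := fun n => by
    induction n with
    | zero => exact Nat.zero_le _
    | succ n ih => have h2 : f n < f (n + 1) := hfmono (Nat.lt.base n); omega
  set r0 : ℕ → V := fun n => (hpf n).choose with hr0
  have hr : ∀ n, s.toFun (f n) = Sum.inl (r0 n) := fun n => (hpf n).choose_spec
  have hinj : Function.Injective r0 := by
    intro a b h
    apply hfmono.injective
    apply s.injective
    rw [hr a, hr b, h]
  have hadjr : ∀ n, G.Adj (r0 n) (r0 (n + 1)) := by
    intro n
    rcases hfsucc n with h1 | ⟨h2, hnp⟩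
    · have ha := s.adj (f n)
      rw [hr n, show f n + 1 = f (n + 1) from h1.symm, hr (n + 1)] at ha
      exact ha
    · cases hsm : s.toFun (f n + 1) with
      | inl a => exact absurd ⟨a, hsm⟩ hnp
      | inr q =>
        have ha := s.adj (f n)
        rw [hr n, hsm] at ha
        have hb := s.adj (f n + 1)
        rw [hsm, show f n + 1 + 1 = f (n + 1) by omega, hr (n + 1)] at hb
        have hne : r0 n ≠ r0 (n + 1) := by
          intro h
          have : f n = f (n + 1) := s.injective (by rw [hr n, hr (n + 1), h])
          omega
        have hmem1 : r0 n ∈ (q.1.1 : Sym2 V) := ha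
        have hmem2 : r0 (n + 1) ∈ (q.1.1 : Sym2 V) := hb
        have hz : (q.1.1 : Sym2 V) = s(r0 n, r0 (n + 1)) :=
          (Sym2.mem_and_mem_iff hne).mp ⟨hmem1, hmem2⟩
        have he := q.1.2.1
        rw [hz] at he
        exact he
  refine ⟨⟨r0, hinj, hadjr⟩, ?_, ?_⟩
  · have huniv : {n : ℕ | ∃ m : ℕ, s.toFun m = Sum.inl (r0 n)} = Set.univ :=
      Set.eq_univ_of_forall (fun n => ⟨f n, hr n⟩)
    exact huniv ▸ Set.infinite_univ
  · intro F hFsub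
    have bound : ∀ t : GraphRay (Hgraph G), ∃ k, ∀ n, k ≤ n →
        s(t.toFun n, t.toFun (n + 1)) ∉ (F : Set (Sym2 (V ⊕ (↥(nonTimidEdges G) × ℕ)))) := by
      intro t
      have hfin : {n | s(t.toFun n, t.toFun (n + 1)) ∈
          (F : Set (Sym2 (V ⊕ (↥(nonTimidEdges G) × ℕ))))}.Finite :=
        Set.Finite.preimage (ray_edge_injective t).injOn F.finite_toSet
      obtain ⟨b, hb⟩ := hfin.bddAbove
      exact ⟨b + 1, fun n hn hmem => by have := hb hmem; omega⟩
    obtain ⟨k1, hk1⟩ := bound s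
    obtain ⟨k2, hk2⟩ := bound (liftRay G ⟨r0, hinj, hadjr⟩)
    refine ⟨f (max k1 k2), max k1 k2, ?_, ?_, ?_⟩
    · intro n hn
      apply hk1
      have := hfge (max k1 k2)
      omega
    · intro n hn
      apply hk2
      omega
    · rw [show s.toFun (f (max k1 k2)) = _ from hr (max k1 k2)]
      exact Reachable.refl _
end

section
/- Let G be a simple graph and U ⊆ V(G). Then the map ρ_• : Ω_U(G) → D_U(G), sending the U-class of a ray r to the U-direction ρ_r, is a topological embedding (injective, continuous, and open onto its image). -/
open SimpleGraph

/-- Symmetry of `ReachAvoiding`. -/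
theorem ReachAvoiding.symm {V : Type*} {G : SimpleGraph V} {F : Set V} {u v : V}
    (h : ReachAvoiding G F u v) : ReachAvoiding G F v u := by
  obtain ⟨w, hw⟩ := h
  exact ⟨w.reverse, fun x hx =>
    hw x (by simpa [SimpleGraph.Walk.support_reverse] using hx)⟩

/-- Transitivity of `ReachAvoiding`. -/
theorem ReachAvoiding.trans {V : Type*} {G : SimpleGraph V} {F : Set V} {u v x : V}
    (h1 : ReachAvoiding G F u v) (h2 : ReachAvoiding G F v x) : ReachAvoiding G F u x := by
  obtain ⟨w1, hw1⟩ := h1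
  obtain ⟨w2, hw2⟩ := h2
  refine ⟨w1.append w2, fun y hy => ?_⟩
  rcases (SimpleGraph.Walk.mem_support_append_iff w1 w2).mp hy with h | h
  · exact hw1 y h
  · exact hw2 y h

/-- Walking along a ray whose tail from `i` on avoids `F` yields reachability in `G − F`. -/
theorem GraphRay.reach_of_tail_avoid {V : Type*} {G : SimpleGraph V} (r : GraphRay G)
    (F : Set V) {i j : ℕ} (hij : i ≤ j) (h : ∀ n, i ≤ n → r.toFun n ∉ F) :
    ReachAvoiding G F (r.toFun i) (r.toFun j) := by
  induction j, hij using Nat.le_induction with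
  | base => exact ⟨SimpleGraph.Walk.nil, by
      intro x hx
      simp only [SimpleGraph.Walk.support_nil, List.mem_singleton] at hx
      subst hx; exact h i le_rfl⟩
  | succ j hij ih =>
    obtain ⟨w, hw⟩ := ih
    refine ⟨w.concat (r.adj j), fun x hx => ?_⟩
    rw [SimpleGraph.Walk.support_concat, List.mem_append] at hx
    rcases hx with hx | hx
    · exact hw x hx
    · simp only [List.mem_singleton] at hx
      subst hx; exact h (j + 1) (by omega)

/-- A ray eventually avoids every finite vertex set. -/
theorem GraphRay.exists_tail_avoid {V : Type*} {G : SimpleGraph V} (r : GraphRay G)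
    (F : Finset V) : ∃ k, ∀ n, k ≤ n → r.toFun n ∉ (F : Set V) := by
  have hfin : {n | r.toFun n ∈ (F : Set V)}.Finite :=
    Set.Finite.preimage r.injective.injOn F.finite_toSet
  obtain ⟨b, hb⟩ := hfin.bddAbove
  exact ⟨b + 1, fun n hn hmem => by have := hb hmem; omega⟩
/-- A `U`-direction of `G`: an assignment, to each finite `F ⊆ U`, of an infinite
connected component of `G − F` (recorded as its vertex set), compatible with inclusions. -/
structure UDirection {V : Type*} (G : SimpleGraph V) (U : Set V) where
  comp : (F : Finset V) → (F : Set V) ⊆ U → Set V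
  isComp : ∀ (F : Finset V) (hF : (F : Set V) ⊆ U),
    ∃ v, v ∉ (F : Set V) ∧ comp F hF = {w | ReachAvoiding G (F : Set V) v w}
  infinite : ∀ (F : Finset V) (hF : (F : Set V) ⊆ U), (comp F hF).Infinite
  mono : ∀ (F F' : Finset V) (hF : (F : Set V) ⊆ U) (hF' : (F' : Set V) ⊆ U),
    F ⊆ F' → comp F' hF' ⊆ comp F hF

theorem UDirection.ext' {V : Type*} {G : SimpleGraph V} {U : Set V}
    {ρ ρ' : UDirection G U} (h : ρ.comp = ρ'.comp) : ρ = ρ' := by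
  cases ρ; cases ρ'; cases h; rfl

/-- The direction space `D_U(G)`, topologized by the basic open sets
`D_U(F, ρ) = {ρ' : ρ'(F) = ρ(F)}` for finite `F ⊆ U`. -/
instance {V : Type*} (G : SimpleGraph V) (U : Set V) : TopologicalSpace (UDirection G U) :=
  TopologicalSpace.generateFrom
    {S | ∃ (F : Finset V) (hF : (F : Set V) ⊆ U) (ρ : UDirection G U),
      S = {ρ' : UDirection G U | ρ'.comp F hF = ρ.comp F hF}}

/-- The `U`-direction `ρ_r` of a ray `r`: it sends a finite `F ⊆ U` to the connected
component of `G − F` containing a tail of `r`. -/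
def rayDirection {V : Type*} (G : SimpleGraph V) (U : Set V) (r : GraphRay G) :
    UDirection G U where
  comp F _ := {w | ∃ k, (∀ n, k ≤ n → r.toFun n ∉ (F : Set V)) ∧
    ReachAvoiding G (F : Set V) (r.toFun k) w}
  isComp := by
    intro F _
    obtain ⟨k0, hk0⟩ := r.exists_tail_avoid F
    refine ⟨r.toFun k0, hk0 k0 le_rfl, ?_⟩
    ext w
    constructor
    · rintro ⟨k, hk, hre⟩
      rcases le_total k0 k with hh | hh
      · exact (r.reach_of_tail_avoid _ hh hk0).trans hre
      · exact (ReachAvoiding.symm (r.reach_of_tail_avoid _ hh hk)).trans hre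
    · intro hw
      exact ⟨k0, hk0, hw⟩
  infinite := by
    intro F _
    obtain ⟨k0, hk0⟩ := r.exists_tail_avoid F
    refine Set.Infinite.mono ?_ ((Set.Ici_infinite k0).image r.injective.injOn)
    rintro _ ⟨n, hn, rfl⟩
    exact ⟨k0, hk0, r.reach_of_tail_avoid _ hn hk0⟩
  mono := by
    rintro F F' hF hF' hss w ⟨k, ht, hw⟩
    exact ⟨k, fun n hn hmem => ht n hn (Finset.coe_subset.mpr hss hmem),
      hw.imp fun p hp => fun x hx hmem => hp x hx (Finset.coe_subset.mpr hss hmem)⟩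

/-- The map `ρ_• : Ω_U(G) → D_U(G)` sending the `U`-class `[r]_U` of a ray to `ρ_r`. -/
def rhoMap {V : Type*} (G : SimpleGraph V) (U : Set V) : OmegaU G U → UDirection G U :=
  Quot.lift (rayDirection G U) (by
    have key : ∀ a b : GraphRay G, UEquiv G U a b → ∀ (F : Finset V) (hF : (F : Set V) ⊆ U),
        (rayDirection G U a).comp F hF ⊆ (rayDirection G U b).comp F hF := by
      rintro a b hab F hF w ⟨k, hk, hre⟩
      obtain ⟨k1, k1', h1, h1', hco⟩ := hab F hF
      refine ⟨k1', h1', ReachAvoiding.trans (ReachAvoiding.symm hco)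
        (ReachAvoiding.trans ?_ hre)⟩
      rcases le_total k1 k with hh | hh
      · exact a.reach_of_tail_avoid _ hh h1
      · exact ReachAvoiding.symm (a.reach_of_tail_avoid _ hh hk)
    intro r r' h
    have hsymm : UEquiv G U r' r := by
      intro F hF
      obtain ⟨k, k', h1, h2, h3⟩ := h F hF
      exact ⟨k', k, h2, h1, ReachAvoiding.symm h3⟩
    refine UDirection.ext' ?_
    funext F hF
    exact subset_antisymm (key r r' h F hF) (key r' r hsymm F hF))

theorem comp_subset_of_tails {V : Type*} {G : SimpleGraph V} (U : Set V)
    {r r' : GraphRay G} {F : Finset V} (hF : (F : Set V) ⊆ U)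
    (h : TailsConnected G (F : Set V) r.toFun r'.toFun) :
    (rayDirection G U r).comp F hF ⊆ (rayDirection G U r').comp F hF := by
  rintro w ⟨k, hk, hre⟩
  obtain ⟨k1, k1', h1, h1', hco⟩ := h
  refine ⟨k1', h1', ReachAvoiding.trans (ReachAvoiding.symm hco)
    (ReachAvoiding.trans ?_ hre)⟩
  rcases le_total k1 k with hh | hh
  · exact r.reach_of_tail_avoid _ hh h1
  · exact ReachAvoiding.symm (r.reach_of_tail_avoid _ hh hk)

theorem comp_eq_iff_tails {V : Type*} {G : SimpleGraph V} (U : Set V)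
    (r r' : GraphRay G) (F : Finset V) (hF : (F : Set V) ⊆ U) :
    (rayDirection G U r).comp F hF = (rayDirection G U r').comp F hF ↔
      TailsConnected G (F : Set V) r.toFun r'.toFun := by
  constructor
  · intro h
    obtain ⟨k0, hk0⟩ := r.exists_tail_avoid F
    have hmem : r.toFun k0 ∈ (rayDirection G U r).comp F hF :=
      ⟨k0, hk0, r.reach_of_tail_avoid _ le_rfl hk0⟩
    rw [h] at hmem
    obtain ⟨k', h', hre⟩ := hmem
    exact ⟨k0, k', hk0, h', ReachAvoiding.symm hre⟩
  · intro h
    refine subset_antisymm (comp_subset_of_tails U hF h) (comp_subset_of_tails U hF ?_)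
    obtain ⟨k, k', h1, h2, h3⟩ := h
    exact ⟨k', k, h2, h1, ReachAvoiding.symm h3⟩

theorem rhoMap_comp_eq_iff {V : Type*} (G : SimpleGraph V) (U : Set V)
    (ε ξ : OmegaU G U) (F : Finset V) (hF : (F : Set V) ⊆ U) :
    (rhoMap G U ξ).comp F hF = (rhoMap G U ε).comp F hF ↔ ξ ∈ uBasic G U F ε := by
  induction ε using Quot.ind with | _ r => ?_
  induction ξ using Quot.ind with | _ s => ?_
  constructor
  · intro h
    exact ⟨r, s, rfl, rfl, (comp_eq_iff_tails U r s F hF).mp h.symm⟩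
  · rintro ⟨r0, s0, hr0, hs0, ht⟩
    rw [← hr0, ← hs0]
    exact ((comp_eq_iff_tails U r0 s0 F hF).mpr ht).symm

/-- For every `U ⊆ V(G)`, the map `ρ_• : Ω_U(G) → D_U(G)`, sending the
`U`-class of a ray `r` to the `U`-direction `ρ_r`, is a topological embedding. -/
theorem rhoMap_isEmbedding {V : Type*} (G : SimpleGraph V) (U : Set V) :
    Topology.IsEmbedding (rhoMap G U) := by
  have hinj : Function.Injective (rhoMap G U) := by
    intro ξ ε h
    induction ξ using Quot.ind with | _ s => ?_
    induction ε using Quot.ind with | _ r => ?_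
    apply Quot.sound
    intro F hF
    exact (comp_eq_iff_tails U s r F hF).mp
      (congrFun (congrFun (congrArg UDirection.comp h) F) hF)
  refine ⟨⟨?_⟩, hinj⟩
  show TopologicalSpace.generateFrom _ =
    TopologicalSpace.induced (rhoMap G U) (TopologicalSpace.generateFrom _)
  rw [induced_generateFrom_eq]
  apply le_antisymm
  · apply le_generateFrom
    rintro s ⟨t, ⟨F, hF, ρ, rfl⟩, rfl⟩
    by_cases hne : ∃ ε : OmegaU G U,
        (rhoMap G U ε).comp F hF = ρ.comp F hF
    · obtain ⟨ε, hε⟩ := hne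
      have hset : rhoMap G U ⁻¹' {ρ' : UDirection G U | ρ'.comp F hF = ρ.comp F hF}
          = uBasic G U F ε := by
        ext ξ
        simp only [Set.mem_preimage, Set.mem_setOf_eq]
        rw [← rhoMap_comp_eq_iff G U ε ξ F hF]
        constructor
        · intro h; rw [h, hε]
        · intro h; rw [h, hε]
      rw [hset]
      exact TopologicalSpace.isOpen_generateFrom_of_mem ⟨F, hF, ε, rfl⟩
    · have hset : rhoMap G U ⁻¹' {ρ' : UDirection G U | ρ'.comp F hF = ρ.comp F hF}
          = ∅ := by
        ext ξ
        simp only [Set.mem_preimage, Set.mem_setOf_eq, Set.mem_empty_iff_false, iff_false]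
        exact fun h => hne ⟨ξ, h⟩
      rw [hset]
      exact isOpen_empty
  · apply le_generateFrom
    rintro s ⟨F, hF, ε, rfl⟩
    have hset : uBasic G U F ε =
        rhoMap G U ⁻¹' {ρ' : UDirection G U | ρ'.comp F hF = (rhoMap G U ε).comp F hF} := by
      ext ξ
      simp only [Set.mem_preimage, Set.mem_setOf_eq]
      exact (rhoMap_comp_eq_iff G U ε ξ F hF).symm
    rw [hset]
    exact TopologicalSpace.isOpen_generateFrom_of_mem
      ⟨{ρ' : UDirection G U | ρ'.comp F hF = (rhoMap G U ε).comp F hF},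
        ⟨F, hF, rhoMap G U ε, rfl⟩, rfl⟩
end

section
/- Let G be the star of countably many rays: a graph consisting of countably infinitely many pairwise disjoint rays together with one additional vertex c adjacent to the initial vertex of each of these rays, and let U = V(G) ∖ {c}. Then the assignment sending each finite F ⊆ U to the connected component of c in G − F is a U-direction of G, and it is not equal to ρ_r for any ray r in G. In particular, ρ_• : Ω_U(G) → D_U(G) is not surjective. -/
open SimpleGraph

/-- The star of countably many rays: the vertex `none` is the center `c`, and for each
`i : ℕ`, the vertices `some (i, 0), some (i, 1), …` form a ray whose initial vertex
`some (i, 0)` is adjacent to the center. -/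
def starOfRays : SimpleGraph (Option (ℕ × ℕ)) where
  Adj x y :=
    (∃ i, (x = none ∧ y = some (i, 0)) ∨ (y = none ∧ x = some (i, 0))) ∨
    (∃ i n, (x = some (i, n) ∧ y = some (i, n + 1)) ∨ (y = some (i, n) ∧ x = some (i, n + 1)))
  symm := by
    constructor
    intro x y h
    rcases h with ⟨i, h⟩ | ⟨i, n, h⟩
    · exact Or.inl ⟨i, h.symm⟩
    · exact Or.inr ⟨i, n, h.symm⟩
  loopless := by
    constructor
    intro x h
    rcases h with ⟨i, ⟨h1, h2⟩ | ⟨h1, h2⟩⟩ | ⟨i, n, ⟨h1, h2⟩ | ⟨h1, h2⟩⟩ <;> simp_all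

/-- `U = V(G) ∖ {c}` for the star of rays. -/
def starU : Set (Option (ℕ × ℕ)) := {v | v ≠ none}

lemma none_notMem_of_subset_starU {F : Finset (Option (ℕ × ℕ))}
    (hF : (F : Set (Option (ℕ × ℕ))) ⊆ starU) : none ∉ (F : Set (Option (ℕ × ℕ))) :=
  fun h => (hF h) rfl

lemma reachAvoiding_refl {V : Type*} {G : SimpleGraph V} {F : Set V} {v : V} (h : v ∉ F) :
    ReachAvoiding G F v v :=
  ⟨SimpleGraph.Walk.nil, by simpa using h⟩

lemma reachAvoiding_adj {V : Type*} {G : SimpleGraph V} {F : Set V} {u v : V}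
    (h : G.Adj u v) (hu : u ∉ F) (hv : v ∉ F) : ReachAvoiding G F u v :=
  ⟨SimpleGraph.Walk.cons h SimpleGraph.Walk.nil, by
    intro x hx
    simp only [SimpleGraph.Walk.support_cons, SimpleGraph.Walk.support_nil,
      List.mem_cons, List.mem_singleton] at hx
    rcases hx with rfl | rfl | h' <;> first | exact hu | exact hv | simp at h'⟩

lemma star_adj_center (i : ℕ) : starOfRays.Adj none (some (i, 0)) :=
  Or.inl ⟨i, Or.inl ⟨rfl, rfl⟩⟩

lemma star_adj_next (i n : ℕ) : starOfRays.Adj (some (i, n)) (some (i, n + 1)) :=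
  Or.inr ⟨i, n, Or.inl ⟨rfl, rfl⟩⟩

/-- From `some (i, n)` with `n ≥ 1`, one cannot reach `none` avoiding `some (i, 0)`. -/
lemma no_escape (i : ℕ) (F : Set (Option (ℕ × ℕ))) (hF : some (i, 0) ∈ F) :
    ∀ (u v : Option (ℕ × ℕ)) (w : starOfRays.Walk u v), v = none →
      (∃ n, 1 ≤ n ∧ u = some (i, n)) → (∀ x ∈ w.support, x ∉ F) → False := by
  intro u v w
  induction w with
  | nil =>
    rintro rfl ⟨n, _, h⟩ _
    simp at h
  | @cons a b _ hab p ih =>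
    rintro rfl ⟨n, hn, rfl⟩ havoid
    have hbF : b ∉ F := havoid b (by simp)
    have hb : ∃ m, 1 ≤ m ∧ b = some (i, m) := by
      rcases hab with ⟨j, ⟨h1, _⟩ | ⟨h1, h2⟩⟩ | ⟨j, k, ⟨h1, h2⟩ | ⟨h2, h1⟩⟩
      · simp at h1
      · obtain ⟨rfl, h0⟩ := Prod.mk.injEq .. ▸ Option.some.inj h2
        omega
      · obtain ⟨rfl, rfl⟩ := Prod.mk.injEq .. ▸ Option.some.inj h1
        exact ⟨n + 1, by omega, h2⟩
      · obtain ⟨rfl, hk⟩ := Prod.mk.injEq .. ▸ Option.some.inj h1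
        refine ⟨k, ?_, h2⟩
        rcases Nat.eq_zero_or_pos k with rfl | hpos
        · exact absurd (h2 ▸ hF) hbF
        · exact hpos
    exact ih rfl hb fun x hx => havoid x (by simp [hx])

lemma branch_step {r : GraphRay starOfRays} {i m : ℕ} {n : ℕ}
    (h : r.toFun n = some (i, m)) (h2 : r.toFun (n + 1) ≠ none) :
    ∃ m', r.toFun (n + 1) = some (i, m') := by
  have hadj := r.adj n
  rw [h] at hadj
  rcases hadj with ⟨j, ⟨h1, _⟩ | ⟨h1, _⟩⟩ | ⟨j, k, ⟨h1, hb⟩ | ⟨hb, h1⟩⟩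
  · simp at h1
  · exact absurd h1 h2
  · obtain ⟨rfl, rfl⟩ := Prod.mk.injEq .. ▸ Option.some.inj h1
    exact ⟨_, hb⟩
  · obtain ⟨rfl, _⟩ := Prod.mk.injEq .. ▸ Option.some.inj h1
    exact ⟨_, hb⟩

/-- Every ray in the star of rays eventually stays in a single branch. -/
lemma ray_eventual_branch (r : GraphRay starOfRays) :
    ∃ i N, ∀ n, N ≤ n → ∃ m, r.toFun n = some (i, m) := by
  have key : ∀ (N i m : ℕ), r.toFun N = some (i, m) →
      (∀ j, N ≤ j → r.toFun j ≠ none) → ∀ n, N ≤ n → ∃ m', r.toFun n = some (i, m') := by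
    intro N i m hN hnone n hn
    induction n, hn using Nat.le_induction with
    | base => exact ⟨m, hN⟩
    | succ n hn ih =>
      obtain ⟨m', hm'⟩ := ih
      exact branch_step hm' (hnone (n + 1) (by omega))
  by_cases h : ∃ k, r.toFun k = none
  · obtain ⟨k, hk⟩ := h
    have hnone : ∀ j, k + 1 ≤ j → r.toFun j ≠ none := by
      intro j hj hj'
      have := r.injective (hj'.trans hk.symm)
      omega
    obtain ⟨i, m, hi⟩ : ∃ i m, r.toFun (k + 1) = some (i, m) := by
      rcases h' : r.toFun (k + 1) with _ | ⟨i, m⟩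
      · exact absurd h' (hnone (k + 1) le_rfl)
      · exact ⟨i, m, rfl⟩
    exact ⟨i, k + 1, key (k + 1) i m hi hnone⟩
  · push_neg at h
    obtain ⟨i, m, hi⟩ : ∃ i m, r.toFun 0 = some (i, m) := by
      rcases h' : r.toFun 0 with _ | ⟨i, m⟩
      · exact absurd h' (h 0)
      · exact ⟨i, m, rfl⟩
    exact ⟨i, 0, key 0 i m hi (fun j _ => h j)⟩

/-- The center reaches the whole branch `i` avoiding `F`, provided branch `i` avoids `F`. -/
lemma center_reaches_branch {F : Finset (Option (ℕ × ℕ))}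
    (hF : (F : Set (Option (ℕ × ℕ))) ⊆ starU) {i : ℕ}
    (hi : ∀ n : ℕ, some (i, n) ∉ F) (n : ℕ) :
    ReachAvoiding starOfRays (F : Set (Option (ℕ × ℕ))) none (some (i, n)) := by
  induction n with
  | zero =>
    exact reachAvoiding_adj (star_adj_center i) (none_notMem_of_subset_starU hF) (hi 0)
  | succ n ih =>
    exact ih.trans (reachAvoiding_adj (star_adj_next i n) (hi n) (hi (n + 1)))

/-- The `U`-direction sending each finite `F ⊆ U` to the component of the center. -/
def centerDirection : UDirection starOfRays starU where
  comp F _ := {w | ReachAvoiding starOfRays (F : Set (Option (ℕ × ℕ))) none w}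
  isComp F hF := ⟨none, none_notMem_of_subset_starU hF, rfl⟩
  infinite F hF := by
    obtain ⟨i, hi⟩ : ∃ i : ℕ, ∀ n : ℕ, some (i, n) ∉ F := by
      obtain ⟨i, hi⟩ := Set.Infinite.nonempty
        ((Set.infinite_univ (α := ℕ)).diff
          (F.finite_toSet.image (fun v => (Option.getD v (0, 0)).1)))
      refine ⟨i, fun n hn => hi.2 ⟨some (i, n), hn, rfl⟩⟩
    refine Set.Infinite.mono (s := (fun n : ℕ => (some (i, n) : Option (ℕ × ℕ))) '' Set.univ) ?_
      (Set.infinite_univ.image (fun a _ b _ h => by simpa using h))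
    rintro _ ⟨n, -, rfl⟩
    exact center_reaches_branch hF hi n
  mono F F' hF hF' hss w hw := by
    obtain ⟨p, hp⟩ := hw
    exact ⟨p, fun x hx hmem => hp x hx (Finset.coe_subset.mpr hss hmem)⟩

/-- For the star `G` of countably many rays with center `c = none` and
`U = V(G) ∖ {c}`, the assignment sending each finite `F ⊆ U` to the connected component of
`c` in `G − F` is a `U`-direction which is not of the form `ρ_r` for any ray `r`; in
particular `ρ_• : Ω_U(G) → D_U(G)` is not surjective. -/
theorem starOfRays_rhoMap_not_surjective :
    ∃ ρ : UDirection starOfRays starU,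
      (∀ (F : Finset (Option (ℕ × ℕ))) (hF : (F : Set (Option (ℕ × ℕ))) ⊆ starU),
        ρ.comp F hF = {w | ReachAvoiding starOfRays (F : Set (Option (ℕ × ℕ))) none w}) ∧
      (∀ r : GraphRay starOfRays, ρ ≠ rayDirection starOfRays starU r) ∧
      ¬ Function.Surjective (rhoMap starOfRays starU) := by
  have hne : ∀ r : GraphRay starOfRays, centerDirection ≠ rayDirection starOfRays starU r := by
    intro r heq
    obtain ⟨i, N, hN⟩ := ray_eventual_branch r
    set F : Finset (Option (ℕ × ℕ)) := {some (i, 0)} with hFdef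
    have hFU : (F : Set (Option (ℕ × ℕ))) ⊆ starU := by
      intro x hx
      simp only [hFdef, Finset.coe_singleton, Set.mem_singleton_iff] at hx
      subst hx; exact Option.some_ne_none _
    have hmem : none ∈ centerDirection.comp F hFU :=
      reachAvoiding_refl (none_notMem_of_subset_starU hFU)
    rw [heq] at hmem
    obtain ⟨k, hk, hre⟩ := hmem
    -- move along the tail to a point in the branch beyond index 0
    obtain ⟨m, hm⟩ := hN (max k N) (le_max_right _ _)
    have hm1 : 1 ≤ m := by
      rcases Nat.eq_zero_or_pos m with rfl | h
      · exact absurd (by simp [hFdef, ← hm])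
          (hk (max k N) (le_max_left _ _))
      · exact h
    have hreach : ReachAvoiding starOfRays (F : Set (Option (ℕ × ℕ)))
        (some (i, m)) none :=
      (hm ▸ (r.reach_of_tail_avoid (F : Set _) (le_max_left k N) hk).symm).trans hre
    obtain ⟨w, hw⟩ := hreach
    exact no_escape i (F : Set (Option (ℕ × ℕ)))
      (by simp [hFdef]) (some (i, m)) none w rfl ⟨m, hm1, rfl⟩ hw
  refine ⟨centerDirection, fun F hF => rfl, hne, ?_⟩
  intro hsurj
  obtain ⟨ξ, hξ⟩ := hsurj centerDirection
  obtain ⟨r, rfl⟩ := Quot.exists_rep ξ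
  exact hne r hξ.symm
end

section
/- Let G be a simple graph and U ⊆ V(G) with ∂t_U ⊆ U. Then the map ρ_• : Ω_U(G) → D_U(G), sending the U-class of a ray r to the U-direction ρ_r, is a homeomorphism. -/
open SimpleGraph

/-- `v` is `U`-timid: for every ray `r` there is a finite `F ⊆ U ∖ {v}` such that no tail
of `r` lies in the connected component of `v` in `G − F`. -/
def UTimid {V : Type*} (G : SimpleGraph V) (U : Set V) (v : V) : Prop :=
  ∀ r : GraphRay G, ∃ F : Finset V, (F : Set V) ⊆ U \ {v} ∧
    ∀ k, (∀ n, k ≤ n → r.toFun n ∉ (F : Set V)) → ¬ ReachAvoiding G (F : Set V) v (r.toFun k)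

/-- `v` is `U`-dense: for every finite `F ⊆ U ∖ {v}`, the connected component of `v` in
`G − F` is infinite. -/
def UDense {V : Type*} (G : SimpleGraph V) (U : Set V) (v : V) : Prop :=
  ∀ F : Finset V, (F : Set V) ⊆ U \ {v} → {w | ReachAvoiding G (F : Set V) v w}.Infinite

/-- `∂t_U`: the set of vertices of `G` that are both `U`-timid and `U`-dense. -/
def timidBoundary {V : Type*} (G : SimpleGraph V) (U : Set V) : Set V :=
  {v | UTimid G U v ∧ UDense G U v}


/-! ### Auxiliary development -/

namespace RhoAux

open Classical

variable {V : Type*} {G : SimpleGraph V} {U : Set V}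

/-- Reachability avoiding a set is preserved under shrinking the avoided set. -/
theorem ReachAvoiding.mono_set {F F' : Set V} {u v : V} (hFF : F ⊆ F')
    (h : ReachAvoiding G F' u v) : ReachAvoiding G F u v := by
  obtain ⟨w, hw⟩ := h
  exact ⟨w, fun x hx hxF => hw x hx (hFF hxF)⟩

theorem ReachAvoiding.refl {F : Set V} {u : V} (hu : u ∉ F) : ReachAvoiding G F u u :=
  ⟨SimpleGraph.Walk.nil, by
    intro x hx
    simp only [SimpleGraph.Walk.support_nil, List.mem_singleton] at hx
    subst hx; exact hu⟩

theorem ReachAvoiding.not_mem_left {F : Set V} {u v : V} (h : ReachAvoiding G F u v) : u ∉ F := by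
  obtain ⟨w, hw⟩ := h
  exact hw u w.start_mem_support

theorem ReachAvoiding.not_mem_right {F : Set V} {u v : V} (h : ReachAvoiding G F u v) : v ∉ F :=
  ReachAvoiding.not_mem_left (ReachAvoiding.symm h)

theorem ReachAvoiding.adj {F : Set V} {u v : V} (hu : u ∉ F) (hv : v ∉ F) (h : G.Adj u v) :
    ReachAvoiding G F u v := by
  refine ⟨SimpleGraph.Walk.cons h SimpleGraph.Walk.nil, ?_⟩
  intro x hx
  simp only [SimpleGraph.Walk.support_cons, SimpleGraph.Walk.support_nil,
    List.mem_cons, List.mem_singleton] at hx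
  rcases hx with rfl | hx
  · exact hu
  · rcases hx with rfl | hx
    · exact hv
    · simp at hx

/-- Every vertex on a walk witnessing `ReachAvoiding` is reachable from the start. -/
theorem reach_of_mem_support {F : Set V} {u v x : V} (w : G.Walk u v)
    (hw : ∀ y ∈ w.support, y ∉ F) (hx : x ∈ w.support) : ReachAvoiding G F u x := by
  refine ⟨w.takeUntil x hx, fun y hy => ?_⟩
  exact hw y (SimpleGraph.Walk.support_takeUntil_subset _ _ hy)

section comp

variable (ρ : UDirection G U)

theorem comp_not_mem {F : Finset V} {hF : (F : Set V) ⊆ U} {u : V}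
    (hu : u ∈ ρ.comp F hF) : u ∉ (F : Set V) := by
  obtain ⟨v, hv, hc⟩ := ρ.isComp F hF
  rw [hc] at hu
  exact ReachAvoiding.not_mem_right hu

theorem comp_reach {F : Finset V} {hF : (F : Set V) ⊆ U} {u v : V}
    (hu : u ∈ ρ.comp F hF) (hv : v ∈ ρ.comp F hF) : ReachAvoiding G (F : Set V) u v := by
  obtain ⟨z, hz, hc⟩ := ρ.isComp F hF
  rw [hc] at hu hv
  exact ReachAvoiding.trans (ReachAvoiding.symm hu) hv

theorem comp_closed {F : Finset V} {hF : (F : Set V) ⊆ U} {u v : V}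
    (hu : u ∈ ρ.comp F hF) (huv : ReachAvoiding G (F : Set V) u v) : v ∈ ρ.comp F hF := by
  obtain ⟨z, hz, hc⟩ := ρ.isComp F hF
  rw [hc] at hu ⊢
  exact ReachAvoiding.trans hu huv

theorem comp_adj_closed {F : Finset V} {hF : (F : Set V) ⊆ U} {u v : V}
    (hu : u ∈ ρ.comp F hF) (h : G.Adj u v) (hv : v ∉ (F : Set V)) : v ∈ ρ.comp F hF :=
  comp_closed ρ hu (ReachAvoiding.adj (comp_not_mem ρ hu) hv h)

theorem comp_eq_reach {F : Finset V} {hF : (F : Set V) ⊆ U} {u : V}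
    (hu : u ∈ ρ.comp F hF) : ρ.comp F hF = {w | ReachAvoiding G (F : Set V) u w} := by
  ext w
  constructor
  · intro hw; exact comp_reach ρ hu hw
  · intro hw; exact comp_closed ρ hu hw

theorem comp_nonempty (F : Finset V) (hF : (F : Set V) ⊆ U) : (ρ.comp F hF).Nonempty :=
  (ρ.infinite F hF).nonempty

/-- If a vertex of `ρ.comp F` can reach (avoiding `S`) a vertex of `ρ.comp (S ∪ F)`, and
`ρ.comp F` is disjoint from `S`, then membership transfers.  Key comparison lemma:
if `ρ.comp F` avoids a finite set `S ⊆ U`, then `ρ.comp F ⊆ ρ.comp S'` for any `S' ⊆ S`. -/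
theorem comp_subset_of_disjoint {F S : Finset V} {hF : (F : Set V) ⊆ U}
    {hS : (S : Set V) ⊆ U} (hdisj : ∀ v ∈ ρ.comp F hF, v ∉ (S : Set V)) :
    ρ.comp F hF ⊆ ρ.comp S hS := by
  intro y hy
  have hsub : (S : Set V) ⊆ ((S ∪ F : Finset V) : Set V) := by
    intro a ha; simp only [Finset.coe_union, Set.mem_union]; exact Or.inl ha
  have hSF : ((S ∪ F : Finset V) : Set V) ⊆ U := by
    intro a ha
    simp only [Finset.coe_union, Set.mem_union] at ha
    rcases ha with h | h
    · exact hS h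
    · exact hF h
  obtain ⟨c, hc⟩ := comp_nonempty ρ (S ∪ F) hSF
  have hcF : c ∈ ρ.comp F hF := ρ.mono F (S ∪ F) hF hSF Finset.subset_union_right hc
  have hcS : c ∈ ρ.comp S hS := ρ.mono S (S ∪ F) hS hSF Finset.subset_union_left hc
  -- reach from y to c avoiding F, with all support in comp F, hence avoiding S
  obtain ⟨w, hw⟩ := comp_reach ρ hy hcF
  have hwS : ∀ x ∈ w.support, x ∉ (S : Set V) := by
    intro x hx
    have hxF : x ∈ ρ.comp F hF := comp_closed ρ hy (reach_of_mem_support w hw hx)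
    exact hdisj x hxF
  exact comp_closed ρ hcS (ReachAvoiding.symm ⟨w, hwS⟩)

end comp

/-- Loyalty: `x` lies in every component of the direction avoiding `x`. -/
def Loyal (G : SimpleGraph V) (U : Set V) (ρ : UDirection G U) (x : V) : Prop :=
  ∀ (F : Finset V) (hF : (F : Set V) ⊆ U), x ∉ (F : Set V) → x ∈ ρ.comp F hF

/-- Criterion for a ray to define a given direction. -/
theorem rayDirection_eq_of_criterion (ρ : UDirection G U) (r : GraphRay G)
    (h : ∀ (F : Finset V) (hF : (F : Set V) ⊆ U),
      ∃ k, (∀ n, k ≤ n → r.toFun n ∉ (F : Set V)) ∧ r.toFun k ∈ ρ.comp F hF) :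
    rayDirection G U r = ρ := by
  refine UDirection.ext' ?_
  funext F hF
  obtain ⟨k, hk, hkc⟩ := h F hF
  ext w
  constructor
  · rintro ⟨k', hk', hre⟩
    -- connect r k' to r k along the ray
    have hconn : ReachAvoiding G (F : Set V) (r.toFun k) (r.toFun k') := by
      rcases le_total k k' with hle | hle
      · exact r.reach_of_tail_avoid _ hle hk
      · exact (r.reach_of_tail_avoid _ hle hk').symm
    exact comp_closed ρ (comp_closed ρ hkc hconn) hre
  · intro hw
    exact ⟨k, hk, comp_reach ρ hkc hw⟩

/-- Case A: a loyal vertex outside `U` yields a defining ray, using the hypothesis. -/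
theorem exists_ray_of_loyal_not_mem (ρ : UDirection G U)
    (hbd : timidBoundary G U ⊆ U) {x : V} (hxU : x ∉ U) (hx : Loyal G U ρ x) :
    ∃ r : GraphRay G, rayDirection G U r = ρ := by
  have hxF : ∀ (F : Finset V), (F : Set V) ⊆ U → x ∉ (F : Set V) := by
    intro F hF hmem; exact hxU (hF hmem)
  -- x is U-dense
  have hdense : UDense G U x := by
    intro F hF'
    have hF : (F : Set V) ⊆ U := fun a ha => (hF' ha).1
    have hxc : x ∈ ρ.comp F hF := hx F hF (hxF F hF)
    have : {w | ReachAvoiding G (F : Set V) x w} = ρ.comp F hF :=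
      (comp_eq_reach ρ hxc).symm
    rw [this]
    exact ρ.infinite F hF
  -- x is not U-timid
  have hnt : ¬ UTimid G U x := by
    intro ht
    exact hxU (hbd ⟨ht, hdense⟩)
  rw [UTimid] at hnt
  push_neg at hnt
  obtain ⟨r, hr⟩ := hnt
  refine ⟨r, rayDirection_eq_of_criterion ρ r ?_⟩
  intro F hF
  have hF' : (F : Set V) ⊆ U \ {x} := by
    intro a ha
    exact ⟨hF ha, by
      intro hax
      simp only [Set.mem_singleton_iff] at hax
      subst hax
      exact hxU (hF ha)⟩
  obtain ⟨k, hk, hreach⟩ := hr F hF'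
  exact ⟨k, hk, comp_closed ρ (hx F hF (hxF F hF)) hreach⟩

section Stitch

variable (Ls : ℕ → List V)

/-- Position (stage, index) of the stitched walk at time `t`. -/
def stPos : ℕ → ℕ × ℕ
  | 0 => (0, 0)
  | t + 1 =>
    let p := stPos t
    if p.2 + 1 < (Ls p.1).length then (p.1, p.2 + 1) else (p.1 + 1, 0)

variable (hne : ∀ m, Ls m ≠ [])

include hne in
theorem stPos_lt : ∀ t, (stPos Ls t).2 < (Ls (stPos Ls t).1).length := by
  intro t
  induction t with
  | zero =>
    simp only [stPos]
    exact List.length_pos_iff.mpr (hne 0)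
  | succ t ih =>
    simp only [stPos]
    split
    · next h => exact h
    · exact List.length_pos_iff.mpr (hne _)

/-- The stitched walk. -/
def stW (t : ℕ) : V :=
  (Ls (stPos Ls t).1).get ⟨(stPos Ls t).2, stPos_lt Ls hne t⟩

theorem stW_mem (t : ℕ) : stW Ls hne t ∈ Ls (stPos Ls t).1 := List.get_mem _ _

theorem stW_eq_of_pos (t m i : ℕ) (hp : stPos Ls t = (m, i)) (h : i < (Ls m).length) :
    stW Ls hne t = (Ls m).get ⟨i, h⟩ := by
  have key : ∀ (p : ℕ × ℕ) (hq : p.2 < (Ls p.1).length), p = (m, i) →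
      (Ls p.1).get ⟨p.2, hq⟩ = (Ls m).get ⟨i, h⟩ := by
    rintro p hq rfl; rfl
  exact key (stPos Ls t) (stPos_lt Ls hne t) hp

theorem stPos_stage_succ (t : ℕ) :
    (stPos Ls (t + 1)).1 = (stPos Ls t).1 ∨ (stPos Ls (t + 1)).1 = (stPos Ls t).1 + 1 := by
  simp only [stPos]
  split
  · exact Or.inl rfl
  · exact Or.inr rfl

theorem stPos_stage_mono : Monotone fun t => (stPos Ls t).1 := by
  apply monotone_nat_of_le_succ
  intro t
  rcases stPos_stage_succ Ls t with h | h <;> omega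

variable (hchain : ∀ m, (Ls m).Chain' G.Adj)
  (hglue : ∀ m, (Ls m).getLast (hne m) = (Ls (m + 1)).head (hne (m + 1)))

include hchain hglue in
theorem stW_step (t : ℕ) :
    G.Adj (stW Ls hne t) (stW Ls hne (t + 1)) ∨ stW Ls hne t = stW Ls hne (t + 1) := by
  have hlt := stPos_lt Ls hne t
  by_cases h : (stPos Ls t).2 + 1 < (Ls (stPos Ls t).1).length
  · left
    have hpos : stPos Ls (t + 1) = ((stPos Ls t).1, (stPos Ls t).2 + 1) := by
      simp only [stPos]; rw [if_pos h]
    have hthis := (List.isChain_iff_getElem.mp (hchain (stPos Ls t).1)) (stPos Ls t).2 (by omega)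
    have e1 : stW Ls hne t = (Ls (stPos Ls t).1).get ⟨(stPos Ls t).2, by omega⟩ :=
      stW_eq_of_pos Ls hne t _ _ rfl _
    have e2 : stW Ls hne (t + 1) = (Ls (stPos Ls t).1).get ⟨(stPos Ls t).2 + 1, by omega⟩ :=
      stW_eq_of_pos Ls hne (t + 1) _ _ hpos _
    rw [e1, e2]
    exact hthis
  · right
    have hpos : stPos Ls (t + 1) = ((stPos Ls t).1 + 1, 0) := by
      simp only [stPos]; rw [if_neg h]
    have h2 : (stPos Ls t).2 = (Ls (stPos Ls t).1).length - 1 := by omega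
    have hlast : stW Ls hne t = (Ls (stPos Ls t).1).getLast (hne _) := by
      have e1 : stW Ls hne t =
          (Ls (stPos Ls t).1).get ⟨(Ls (stPos Ls t).1).length - 1, by omega⟩ :=
        stW_eq_of_pos Ls hne t _ _ (by rw [← h2]) _
      rw [e1, List.getLast_eq_getElem]
      simp [List.get_eq_getElem]
    have hhead : stW Ls hne (t + 1) = (Ls ((stPos Ls t).1 + 1)).head (hne _) := by
      have e2 : stW Ls hne (t + 1) = (Ls ((stPos Ls t).1 + 1)).get ⟨0, by
          exact List.length_pos_iff.mpr (hne _)⟩ :=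
        stW_eq_of_pos Ls hne (t + 1) _ _ hpos _
      rw [e2, List.head_eq_getElem_zero]
      simp [List.get_eq_getElem]
    rw [hlast, hhead, hglue]

/-- Anchor times: time at which the walk starts stage `m`. -/
def stTau : ℕ → ℕ
  | 0 => 0
  | m + 1 => stTau m + (Ls m).length

theorem stPos_within (t i m : ℕ) (hpt : stPos Ls t = (m, 0)) (hi : i < (Ls m).length) :
    stPos Ls (t + i) = (m, i) := by
  induction i with
  | zero => simpa using hpt
  | succ i ih =>
    have hi' : i < (Ls m).length := by omega
    have := ih hi'
    show stPos Ls (t + i + 1) = (m, i + 1)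
    simp only [stPos, this]
    rw [if_pos]
    exact hi

include hne in
theorem stPos_tau : ∀ m, stPos Ls (stTau Ls m) = (m, 0) := by
  intro m
  induction m with
  | zero => rfl
  | succ m ih =>
    have hlen : 0 < (Ls m).length := List.length_pos_iff.mpr (hne m)
    have hw := stPos_within Ls (stTau Ls m) ((Ls m).length - 1) m ih (by omega)
    show stPos Ls (stTau Ls m + (Ls m).length) = (m + 1, 0)
    have : stTau Ls m + (Ls m).length = (stTau Ls m + ((Ls m).length - 1)) + 1 := by omega
    rw [this]
    simp only [stPos, hw]
    rw [if_neg (by omega)]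

include hne in
theorem stTau_strictMono : StrictMono (stTau Ls) := by
  apply strictMono_nat_of_lt_succ
  intro m
  have : 0 < (Ls m).length := List.length_pos_iff.mpr (hne m)
  show stTau Ls m < stTau Ls m + (Ls m).length
  omega

theorem stW_tau (m : ℕ) : stW Ls hne (stTau Ls m) = (Ls m).head (hne m) := by
  have e : stW Ls hne (stTau Ls m) = (Ls m).get ⟨0, List.length_pos_iff.mpr (hne m)⟩ :=
    stW_eq_of_pos Ls hne _ _ _ (stPos_tau Ls hne m) _
  rw [e, List.head_eq_getElem_zero]
  simp [List.get_eq_getElem]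

include hne in
theorem stage_ge_of_ge_tau (m t : ℕ) (ht : stTau Ls m ≤ t) : m ≤ (stPos Ls t).1 := by
  have h1 : (stPos Ls (stTau Ls m)).1 = m := by rw [stPos_tau Ls hne]
  calc m = (stPos Ls (stTau Ls m)).1 := h1.symm
    _ ≤ (stPos Ls t).1 := stPos_stage_mono Ls ht

include hchain hglue in
theorem stW_reach (F : Set V) (t t' : ℕ) (htt : t ≤ t')
    (havoid : ∀ s, t ≤ s → s ≤ t' → stW Ls hne s ∉ F) :
    ReachAvoiding G F (stW Ls hne t) (stW Ls hne t') := by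
  induction t', htt using Nat.le_induction with
  | base => exact ReachAvoiding.refl (havoid t le_rfl le_rfl)
  | succ t' htt ih =>
    have hstep := stW_step Ls hne hchain hglue t'
    have hr : ReachAvoiding G F (stW Ls hne t) (stW Ls hne t') :=
      ih fun s hs hs' => havoid s hs (by omega)
    rcases hstep with hadj | heq
    · exact hr.trans (ReachAvoiding.adj (havoid t' (by omega) (by omega))
        (havoid (t' + 1) (by omega) le_rfl) hadj)
    · rwa [← heq]

end Stitch

section Extract

variable (Ls : ℕ → List V) (hne : ∀ m, Ls m ≠ [])
  (hchain : ∀ m, (Ls m).Chain' G.Adj)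
  (hglue : ∀ m, (Ls m).getLast (hne m) = (Ls (m + 1)).head (hne (m + 1)))
  (hvan : ∀ v : V, ∃ M, ∀ m, M ≤ m → v ∉ Ls m)

include hvan in
theorem stW_bound (v : V) : ∃ B, ∀ t, B ≤ t → stW Ls hne t ≠ v := by
  obtain ⟨M, hM⟩ := hvan v
  refine ⟨stTau Ls M, fun t ht hv => ?_⟩
  have hst : M ≤ (stPos Ls t).1 := stage_ge_of_ge_tau Ls hne M t ht
  have := stW_mem Ls hne t
  rw [hv] at this
  exact hM _ hst this

open Classical in
noncomputable def exT : ℕ → ℕ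
  | 0 => 0
  | k + 1 =>
    Nat.findGreatest (fun t => stW Ls hne t = stW Ls hne (exT k))
      (stW_bound Ls hne hvan (stW Ls hne (exT k))).choose + 1

theorem exT_lastOcc (k : ℕ) :
    stW Ls hne (exT Ls hne hvan (k + 1) - 1) = stW Ls hne (exT Ls hne hvan k) ∧
    exT Ls hne hvan k < exT Ls hne hvan (k + 1) ∧
    (∀ t, exT Ls hne hvan (k + 1) ≤ t → stW Ls hne t ≠ stW Ls hne (exT Ls hne hvan k)) := by
  set v := stW Ls hne (exT Ls hne hvan k) with hv
  set B := (stW_bound Ls hne hvan v).choose with hB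
  have hBspec := (stW_bound Ls hne hvan v).choose_spec
  have hkB : exT Ls hne hvan k ≤ B := by
    by_contra h
    exact hBspec _ (by omega) rfl
  set L := Nat.findGreatest (fun t => stW Ls hne t = v) B with hL
  have hP : stW Ls hne L = v :=
    Nat.findGreatest_spec (P := fun t => stW Ls hne t = v) hkB rfl
  have hge : exT Ls hne hvan k ≤ L :=
    Nat.le_findGreatest (P := fun t => stW Ls hne t = v) hkB rfl
  have hgt : ∀ t, L < t → stW Ls hne t ≠ v := by
    intro t hLt
    by_cases htB : t ≤ B
    · exact Nat.findGreatest_is_greatest (P := fun t => stW Ls hne t = v) hLt htB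
    · exact hBspec t (by omega)
  have hTsucc : exT Ls hne hvan (k + 1) = L + 1 := rfl
  refine ⟨?_, by omega, ?_⟩
  · rw [hTsucc]; simpa using hP
  · intro t ht
    exact hgt t (by omega)

theorem exT_strictMono : StrictMono (exT Ls hne hvan) := by
  apply strictMono_nat_of_lt_succ
  intro k
  exact (exT_lastOcc Ls hne hvan k).2.1

/-- The extracted ray. -/
noncomputable def exRay : GraphRay G where
  toFun k := stW Ls hne (exT Ls hne hvan k)
  injective := by
    have key : ∀ k k', k < k' →
        stW Ls hne (exT Ls hne hvan k') ≠ stW Ls hne (exT Ls hne hvan k) := by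
      intro k k' hkk'
      have h1 := (exT_lastOcc Ls hne hvan k).2.2
      have h2 : exT Ls hne hvan (k + 1) ≤ exT Ls hne hvan k' :=
        (exT_strictMono Ls hne hvan).le_iff_le.mpr hkk'
      exact h1 _ h2
    intro k k' h
    by_contra hne'
    rcases lt_or_gt_of_ne hne' with hlt | hlt
    · exact key k k' hlt h.symm
    · exact key k' k hlt h
  adj := by
    intro k
    have hlast := (exT_lastOcc Ls hne hvan k).1
    have hlt := (exT_lastOcc Ls hne hvan k).2.1
    have hne2 := (exT_lastOcc Ls hne hvan k).2.2 _ le_rfl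
    have hstep := stW_step Ls hne hchain hglue (exT Ls hne hvan (k + 1) - 1)
    have heq : exT Ls hne hvan (k + 1) - 1 + 1 = exT Ls hne hvan (k + 1) := by omega
    rw [heq] at hstep
    rcases hstep with hadj | heq2
    · show G.Adj (stW Ls hne (exT Ls hne hvan k)) (stW Ls hne (exT Ls hne hvan (k + 1)))
      rwa [← hlast]
    · exfalso
      rw [hlast] at heq2
      exact hne2 heq2.symm

theorem exT_ge (k : ℕ) : k ≤ exT Ls hne hvan k :=
  (exT_strictMono Ls hne hvan).le_apply

end Extract

section B1

variable (ρ : UDirection G U)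

theorem exists_kill_of_not_loyal {v : V} (h : ¬ Loyal G U ρ v) :
    ∃ F : Finset V, ((F : Set V) ⊆ U) ∧ v ∉ (F : Set V) ∧
      ∀ (A : Finset V) (hA : (A : Set V) ⊆ U), F ⊆ A → v ∉ ρ.comp A hA := by
  rw [Loyal] at h
  push_neg at h
  obtain ⟨F, hF, hvF, hvc⟩ := h
  refine ⟨F, hF, hvF, fun A hA hFA hvA => ?_⟩
  exact hvc (ρ.mono F A hF hA hFA hvA)

/-- A uniform "kill set" for each vertex, valid when every loyal vertex lies in `U`. -/
noncomputable def killB1 (hLU : ∀ x : V, Loyal G U ρ x → x ∈ U) (v : V) : Finset V :=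
  if hv : v ∈ U then {v}
  else (exists_kill_of_not_loyal ρ (fun hl => hv (hLU v hl))).choose

theorem killB1_subU (hLU : ∀ x : V, Loyal G U ρ x → x ∈ U) (v : V) :
    ((killB1 ρ hLU v : Finset V) : Set V) ⊆ U := by
  unfold killB1
  split
  · next hv => intro a ha; simp only [Finset.coe_singleton, Set.mem_singleton_iff] at ha
               subst ha; exact hv
  · next hv =>
      exact (exists_kill_of_not_loyal ρ (fun hl => hv (hLU v hl))).choose_spec.1

theorem killB1_dead (hLU : ∀ x : V, Loyal G U ρ x → x ∈ U) (v : V)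
    (A : Finset V) (hA : (A : Set V) ⊆ U) (hsub : killB1 ρ hLU v ⊆ A) :
    v ∉ ρ.comp A hA := by
  unfold killB1 at hsub
  intro hvc
  split at hsub
  · next hv =>
      have : v ∈ A := hsub (Finset.mem_singleton_self v)
      exact comp_not_mem ρ hvc this
  · next hv =>
      exact (exists_kill_of_not_loyal ρ
        (fun hl => hv (hLU v hl))).choose_spec.2.2 A hA hsub hvc

theorem loyal_mem_comp {x : V} (hx : Loyal G U ρ x) {F : Finset V}
    (hF : (F : Set V) ⊆ U) (hxF : x ∉ F) : x ∈ ρ.comp F hF :=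
  hx F hF (by simpa using hxF)

/-- One stage of the construction in the case of infinitely many loyal vertices. -/
structure B1Rec (ρ : UDirection G U) where
  A : Finset V
  hA : (A : Set V) ⊆ U
  x : V
  X : Finset V
  seg : List V
  xp : V
  Aprev : Finset V
  hAprev : (Aprev : Set V) ⊆ U
  hAprevsub : Aprev ⊆ A
  Xprev : Finset V
  hXprevsub : Xprev ⊆ X
  hxXprev : x ∉ Xprev
  hxLoyal : Loyal G U ρ x
  hxA : x ∉ A
  hxX : x ∈ X
  hsegne : seg ≠ []
  hseghead : seg.head hsegne = xp
  hseglast : seg.getLast hsegne = x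
  hsegchain : seg.Chain' G.Adj
  hsegmem : ∀ y ∈ seg, y ∈ ρ.comp Aprev hAprev

variable (hLU : ∀ x : V, Loyal G U ρ x → x ∈ U)
  (hLinf : {x : V | Loyal G U ρ x}.Infinite)

open Classical in
/-- The step of the loyal-anchor construction. -/
noncomputable def b1step (r : B1Rec ρ) : B1Rec ρ := by
  refine
    let A' : Finset V := r.A ∪ r.seg.toFinset.biUnion (killB1 ρ hLU)
    let hA' : (A' : Set V) ⊆ U := ?_
    let hx' : ∃ z ∈ {x : V | Loyal G U ρ x}, z ∉ A' ∪ r.X := hLinf.exists_notMem_finset _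
    let x' : V := hx'.choose
    let hw : ReachAvoiding G (r.A : Set V) r.x x' := ?_
    let w := hw.choose
    { A := A', hA := hA', x := x', X := r.X ∪ {x'}, seg := w.support, xp := r.x,
      Aprev := r.A, hAprev := r.hA, hAprevsub := Finset.subset_union_left,
      Xprev := r.X,
      hXprevsub := Finset.subset_union_left,
      hxXprev := fun hmem => hx'.choose_spec.2 (Finset.mem_union_right _ hmem),
      hxLoyal := hx'.choose_spec.1,
      hxA := by
        have := hx'.choose_spec.2
        intro hmem
        exact this (Finset.mem_union_left _ hmem),
      hxX := Finset.mem_union_right _ (Finset.mem_singleton_self _),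
      hsegne := SimpleGraph.Walk.support_ne_nil _,
      hseghead := SimpleGraph.Walk.head_support _,
      hseglast := SimpleGraph.Walk.getLast_support _,
      hsegchain := SimpleGraph.Walk.isChain_adj_support _,
      hsegmem := ?_ }
  · -- A' ⊆ U
    intro a ha
    simp only [A', Finset.coe_union, Set.mem_union, Finset.coe_biUnion, Set.mem_iUnion,
      Finset.mem_coe, List.mem_toFinset] at ha
    rcases ha with h | h
    · exact r.hA h
    · obtain ⟨y, _, hy⟩ := h
      exact killB1_subU ρ hLU y hy
  · -- reach from r.x to x'
    have hx1 : r.x ∈ ρ.comp r.A r.hA := loyal_mem_comp ρ r.hxLoyal r.hA r.hxA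
    have hx2 : x' ∈ ρ.comp r.A r.hA := by
      refine loyal_mem_comp ρ hx'.choose_spec.1 r.hA ?_
      intro hmem
      exact hx'.choose_spec.2
        (Finset.mem_union_left _ (Finset.mem_union_left _ hmem))
    exact comp_reach ρ hx1 hx2
  · -- support membership
    intro y hy
    have hx1 : r.x ∈ ρ.comp r.A r.hA := loyal_mem_comp ρ r.hxLoyal r.hA r.hxA
    exact comp_closed ρ hx1 (reach_of_mem_support _ hw.choose_spec hy)

open Classical in
/-- The base stage. -/
noncomputable def b1base : B1Rec ρ := by
  refine
    let hx0 : ∃ z ∈ {x : V | Loyal G U ρ x}, z ∉ (∅ : Finset V) := hLinf.exists_notMem_finset _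
    let x0 : V := hx0.choose
    { A := ∅, hA := by simp, x := x0, X := {x0}, seg := [x0], xp := x0,
      Aprev := ∅, hAprev := by simp, hAprevsub := le_rfl,
      Xprev := ∅,
      hXprevsub := by simp,
      hxXprev := Finset.notMem_empty _,
      hxLoyal := hx0.choose_spec.1,
      hxA := Finset.notMem_empty _,
      hxX := Finset.mem_singleton_self _,
      hsegne := by simp,
      hseghead := rfl,
      hseglast := rfl,
      hsegchain := List.isChain_singleton _,
      hsegmem := ?_ }
  intro y hy
  simp only [List.mem_singleton] at hy
  subst hy
  exact loyal_mem_comp ρ hx0.choose_spec.1 _ (Finset.notMem_empty _)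

/-- The sequence of stages. -/
noncomputable def b1seq : ℕ → B1Rec ρ
  | 0 => b1base ρ hLinf
  | m + 1 => b1step ρ hLU hLinf (b1seq m)

theorem b1seq_succ (m : ℕ) :
    b1seq ρ hLU hLinf (m + 1) = b1step ρ hLU hLinf (b1seq ρ hLU hLinf m) := rfl

theorem b1_A_mono : Monotone fun m => (b1seq ρ hLU hLinf m).A := by
  apply monotone_nat_of_le_succ
  intro m
  rw [b1seq_succ]
  exact Finset.subset_union_left

theorem b1_xp_succ (m : ℕ) :
    (b1seq ρ hLU hLinf (m + 1)).xp = (b1seq ρ hLU hLinf m).x := rfl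

theorem b1_Aprev_succ (m : ℕ) :
    (b1seq ρ hLU hLinf (m + 1)).Aprev = (b1seq ρ hLU hLinf m).A := rfl

theorem b1_kills_sub (m : ℕ) {y : V} (hy : y ∈ (b1seq ρ hLU hLinf (m + 1)).seg) :
    killB1 ρ hLU y ⊆ (b1seq ρ hLU hLinf (m + 2)).A := by
  rw [b1seq_succ ρ hLU hLinf (m + 1)]
  intro a ha
  exact Finset.mem_union_right _ (Finset.mem_biUnion.mpr ⟨y, List.mem_toFinset.mpr hy, ha⟩)

theorem b1_X_mono : Monotone fun m => (b1seq ρ hLU hLinf m).X := by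
  apply monotone_nat_of_le_succ
  intro m
  rw [b1seq_succ]
  exact Finset.subset_union_left

theorem b1_Xprev_succ (m : ℕ) :
    (b1seq ρ hLU hLinf (m + 1)).Xprev = (b1seq ρ hLU hLinf m).X := rfl

theorem b1_anchor_injective : Function.Injective fun m => (b1seq ρ hLU hLinf m).x := by
  have key : ∀ m m', m < m' → (b1seq ρ hLU hLinf m').x ≠ (b1seq ρ hLU hLinf m).x := by
    intro m m' hmm'
    obtain ⟨m'', rfl⟩ : ∃ m'', m' = m'' + 1 := ⟨m' - 1, by omega⟩
    intro heq
    have hX : (b1seq ρ hLU hLinf m).x ∈ (b1seq ρ hLU hLinf m'').X :=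
      b1_X_mono ρ hLU hLinf (by omega : m ≤ m'') (b1seq ρ hLU hLinf m).hxX
    rw [← heq] at hX
    rw [← b1_Xprev_succ ρ hLU hLinf m''] at hX
    exact (b1seq ρ hLU hLinf (m'' + 1)).hxXprev hX
  intro m m' h
  by_contra hne'
  rcases lt_or_gt_of_ne hne' with hlt | hlt
  · exact key m m' hlt h.symm
  · exact key m' m hlt h

theorem comp_congr {F F' : Finset V} (hFF : F = F') (hF : (F : Set V) ⊆ U)
    (hF' : (F' : Set V) ⊆ U) : ρ.comp F hF = ρ.comp F' hF' := by
  subst hFF; rfl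

include hLU hLinf in
/-- Main conclusion in the case of infinitely many loyal vertices. -/
theorem exists_ray_of_loyal_infinite :
    ∃ r : GraphRay G, rayDirection G U r = ρ := by
  classical
  set Ls : ℕ → List V := fun m => (b1seq ρ hLU hLinf (m + 1)).seg with hLs
  have hne : ∀ m, Ls m ≠ [] := fun m => (b1seq ρ hLU hLinf (m + 1)).hsegne
  have hchain : ∀ m, (Ls m).Chain' G.Adj := fun m => (b1seq ρ hLU hLinf (m + 1)).hsegchain
  have hglue : ∀ m, (Ls m).getLast (hne m) = (Ls (m + 1)).head (hne (m + 1)) := by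
    intro m
    have h1 : (Ls m).getLast (hne m) = (b1seq ρ hLU hLinf (m + 1)).x :=
      (b1seq ρ hLU hLinf (m + 1)).hseglast
    have h2 : (Ls (m + 1)).head (hne (m + 1)) = (b1seq ρ hLU hLinf (m + 2)).xp :=
      (b1seq ρ hLU hLinf (m + 2)).hseghead
    rw [h1, h2, b1_xp_succ]
  have hsegsub : ∀ j, ∀ y ∈ Ls j,
      y ∈ ρ.comp (b1seq ρ hLU hLinf j).A (b1seq ρ hLU hLinf j).hA := by
    intro j y hy
    have := (b1seq ρ hLU hLinf (j + 1)).hsegmem y hy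
    rwa [comp_congr ρ (b1_Aprev_succ ρ hLU hLinf j) _ _] at this
  have hdead : ∀ m j, m + 2 ≤ j → ∀ y ∈ Ls m,
      y ∉ ρ.comp (b1seq ρ hLU hLinf j).A (b1seq ρ hLU hLinf j).hA := by
    intro m j hmj y hy
    refine killB1_dead ρ hLU y _ _ ?_
    exact (b1_kills_sub ρ hLU hLinf m hy).trans (b1_A_mono ρ hLU hLinf (by omega : m + 2 ≤ j))
  have hvan : ∀ v : V, ∃ M, ∀ m, M ≤ m → v ∉ Ls m := by
    intro v
    by_cases h : ∃ m, v ∈ Ls m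
    · obtain ⟨m₀, hm₀⟩ := h
      refine ⟨m₀ + 2, fun m hm hvm => ?_⟩
      exact hdead m₀ m hm v hm₀ (hsegsub m v hvm)
    · push_neg at h
      exact ⟨0, fun m _ => h m⟩
  refine ⟨exRay Ls hne hchain hglue hvan, rayDirection_eq_of_criterion ρ _ ?_⟩
  intro F hF
  -- a bound beyond which the walk avoids F
  have hbnd : ∃ B, ∀ t, B ≤ t → stW Ls hne t ∉ (F : Set V) := by
    refine ⟨F.sup (fun f => (stW_bound Ls hne hvan f).choose), fun t ht hmem => ?_⟩
    have hle : (stW_bound Ls hne hvan (stW Ls hne t)).choose ≤ t :=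
      le_trans (Finset.le_sup (f := fun f => (stW_bound Ls hne hvan f).choose)
        (Finset.mem_coe.mp hmem)) ht
    exact (stW_bound Ls hne hvan (stW Ls hne t)).choose_spec t hle rfl
  obtain ⟨B, hB⟩ := hbnd
  -- anchors eventually avoid F
  have hanchor : ∃ M₁, ∀ m, M₁ ≤ m → (b1seq ρ hLU hLinf m).x ∉ (F : Set V) := by
    have hfin : {m : ℕ | (b1seq ρ hLU hLinf m).x ∈ (F : Set V)}.Finite :=
      Set.Finite.preimage (Function.Injective.injOn (b1_anchor_injective ρ hLU hLinf))
        F.finite_toSet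
    obtain ⟨b, hb⟩ := hfin.bddAbove
    exact ⟨b + 1, fun m hm hmem => by have := hb hmem; omega⟩
  obtain ⟨M₁, hM₁⟩ := hanchor
  set k := B with hk
  set t₀ := exT Ls hne hvan k with ht₀
  have ht₀B : B ≤ t₀ := le_trans (le_refl B) (exT_ge Ls hne hvan k)
  refine ⟨k, ?_, ?_⟩
  · intro n hn
    exact hB _ (le_trans (le_trans hn (exT_ge Ls hne hvan n)) le_rfl)
  · -- r k lies in the component
    set m := max M₁ t₀ with hm
    have htau : t₀ ≤ stTau Ls m :=
      le_trans (le_max_right _ _) (stTau_strictMono Ls hne).le_apply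
    have hreach : ReachAvoiding G (F : Set V) (stW Ls hne t₀) (stW Ls hne (stTau Ls m)) := by
      refine stW_reach Ls hne hchain hglue _ t₀ (stTau Ls m) htau ?_
      intro s hs _
      exact hB s (le_trans ht₀B hs)
    have hanch : stW Ls hne (stTau Ls m) = (b1seq ρ hLU hLinf m).x := by
      rw [stW_tau Ls hne m]
      have h2 : (Ls m).head (hne m) = (b1seq ρ hLU hLinf (m + 1)).xp :=
        (b1seq ρ hLU hLinf (m + 1)).hseghead
      rw [h2, b1_xp_succ]
    have hxm : (b1seq ρ hLU hLinf m).x ∈ ρ.comp F hF := by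
      refine loyal_mem_comp ρ (b1seq ρ hLU hLinf m).hxLoyal hF ?_
      intro hmem
      exact hM₁ m (le_max_left _ _) (by simpa using hmem)
    rw [hanch] at hreach
    exact comp_closed ρ hxm (ReachAvoiding.symm hreach)

end B1

section B2

/-- An abstract family of components: for each finite `F ⊆ U`, a nonempty set that is
contained in a single component of `G − (F ∪ D)` and closed under reachability there. -/
structure CompFam (G : SimpleGraph V) (U : Set V) where
  C : (F : Finset V) → ((F : Set V) ⊆ U) → Set V
  D : Set V
  cne : ∀ (F : Finset V) (hF : (F : Set V) ⊆ U), (C F hF).Nonempty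
  cmono : ∀ (F F' : Finset V) (hF : (F : Set V) ⊆ U) (hF' : (F' : Set V) ⊆ U),
    F ⊆ F' → C F' hF' ⊆ C F hF
  cnm : ∀ (F : Finset V) (hF : (F : Set V) ⊆ U) (u : V), u ∈ C F hF → u ∉ (F : Set V) ∪ D
  creach : ∀ (F : Finset V) (hF : (F : Set V) ⊆ U) (u v : V), u ∈ C F hF → v ∈ C F hF →
    ReachAvoiding G ((F : Set V) ∪ D) u v
  cclosed : ∀ (F : Finset V) (hF : (F : Set V) ⊆ U) (u v : V), u ∈ C F hF →
    ReachAvoiding G ((F : Set V) ∪ D) u v → v ∈ C F hF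

theorem union_subU {F F' : Finset V} (hF : (F : Set V) ⊆ U) (hF' : (F' : Set V) ⊆ U) :
    ((F ∪ F' : Finset V) : Set V) ⊆ U := by
  intro a ha
  simp only [Finset.coe_union, Set.mem_union] at ha
  rcases ha with h | h
  · exact hF h
  · exact hF' h

variable (σ : CompFam G U)

theorem cfam_congr {F F' : Finset V} (hFF : F = F') (hF : (F : Set V) ⊆ U)
    (hF' : (F' : Set V) ⊆ U) : σ.C F hF = σ.C F' hF' := by
  subst hFF; rfl

theorem cfam_adj_closed {F : Finset V} {hF : (F : Set V) ⊆ U} {u v : V}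
    (hu : u ∈ σ.C F hF) (h : G.Adj u v) (hv : v ∉ (F : Set V) ∪ σ.D) : v ∈ σ.C F hF :=
  σ.cclosed F hF u v hu (ReachAvoiding.adj (σ.cnm F hF u hu) hv h)

theorem cfam_subset_of_disjoint {F S : Finset V} {hF : (F : Set V) ⊆ U}
    {hS : (S : Set V) ⊆ U} (hdisj : ∀ v ∈ σ.C F hF, v ∉ (S : Set V)) :
    σ.C F hF ⊆ σ.C S hS := by
  intro y hy
  have hSF : ((S ∪ F : Finset V) : Set V) ⊆ U := union_subU hS hF
  obtain ⟨c, hc⟩ := σ.cne (S ∪ F) hSF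
  have hcF : c ∈ σ.C F hF := σ.cmono F (S ∪ F) hF hSF Finset.subset_union_right hc
  have hcS : c ∈ σ.C S hS := σ.cmono S (S ∪ F) hS hSF Finset.subset_union_left hc
  obtain ⟨w, hw⟩ := σ.creach F hF y c hy hcF
  have hwS : ∀ x ∈ w.support, x ∉ (S : Set V) ∪ σ.D := by
    intro x hx
    have hxF : x ∈ σ.C F hF :=
      σ.cclosed F hF y x hy (reach_of_mem_support w hw hx)
    intro hmem
    rcases hmem with h | h
    · exact hdisj x hxF h
    · exact σ.cnm F hF x hxF (Or.inr h)
  exact σ.cclosed S hS c y hcS (ReachAvoiding.symm ⟨w, hwS⟩)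

variable (K : V → Finset V)
  (hKU : ∀ v : V, ((K v : Finset V) : Set V) ⊆ U)
  (hKv : ∀ v : V, v ∉ K v)
  (hKdead : ∀ v : V, v ∉ σ.C (K v) (hKU v))

include hKv hKdead in
theorem b2_descent (OLDV A' : Finset V) (hA' : (A' : Set V) ⊆ U)
    (habs : ∀ v ∈ OLDV, K v ⊆ OLDV ∪ A')
    (c : V) (hc : ∀ v ∈ OLDV, c ∈ σ.C (K v ∪ A') (union_subU (hKU v) hA')) :
    ∀ (n : ℕ) (x : V), x ∈ OLDV → ∀ (w : G.Walk x c),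
      (∀ y ∈ w.support, y ∉ (A' : Set V) ∪ σ.D) → w.length ≤ n → False := by
  classical
  have main : ∀ (n : ℕ) (x : V), x ∈ OLDV → ∀ (w : G.Walk x c),
      (∀ y ∈ w.support, y ∉ (A' : Set V) ∪ σ.D) → w.length ≤ n →
      (∀ (x' : V), x' ∈ OLDV → ∀ (w' : G.Walk x' c),
        (∀ y ∈ w'.support, y ∉ (A' : Set V) ∪ σ.D) → w'.length < w.length → False) → False := by
    intro n x hx w hw _ ih
    by_cases hhit : ∃ u ∈ w.support, u ∈ K x
    · obtain ⟨u, hu, huK⟩ := hhit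
      have hux : u ≠ x := fun h => hKv x (h ▸ huK)
      have huO : u ∈ OLDV := by
        rcases Finset.mem_union.mp (habs x hx huK) with h | h
        · exact h
        · exact absurd (Or.inl (Finset.mem_coe.mpr h)) (hw u hu)
      have hsup : ∀ y ∈ (w.dropUntil u hu).support, y ∉ (A' : Set V) ∪ σ.D := fun y hy =>
        hw y (SimpleGraph.Walk.support_dropUntil_subset w hu hy)
      have hspec := congrArg SimpleGraph.Walk.length (w.take_spec hu)
      rw [SimpleGraph.Walk.length_append] at hspec
      have htk : 0 < (w.takeUntil u hu).length := by
        rcases Nat.eq_zero_or_pos (w.takeUntil u hu).length with h0 | h0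
        · exact absurd (SimpleGraph.Walk.eq_of_length_eq_zero h0).symm hux
        · exact h0
      exact ih u huO (w.dropUntil u hu) hsup (by omega)
    · push_neg at hhit
      have hreach : ReachAvoiding G (((K x ∪ A' : Finset V) : Set V) ∪ σ.D) x c := by
        refine ⟨w, fun y hy => ?_⟩
        simp only [Finset.coe_union, Set.mem_union]
        rintro ((h | h) | h)
        · exact hhit y hy (Finset.mem_coe.mp h)
        · exact hw y hy (Or.inl h)
        · exact hw y hy (Or.inr h)
      have hxc : x ∈ σ.C (K x ∪ A') (union_subU (hKU x) hA') :=
        σ.cclosed _ _ c x (hc x hx) (ReachAvoiding.symm hreach)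
      have : x ∈ σ.C (K x) (hKU x) :=
        σ.cmono (K x) (K x ∪ A') (hKU x) _ Finset.subset_union_left hxc
      exact hKdead x this
  intro n
  induction n with
  | zero =>
    intro x hx w hw hlen
    refine main 0 x hx w hw hlen ?_
    intro x' hx' w' hw' hlt
    omega
  | succ n ih =>
    intro x hx w hw hlen
    refine main (n + 1) x hx w hw hlen ?_
    intro x' hx' w' hw' hlt
    exact ih x' hx' w' hw' (by omega)

include hKv hKdead in
/-- The key step lemma: after absorbing all kills of the old set, the old set is dead
and the components decrease. -/
theorem b2_key (OLDV A A' : Finset V) (hA : (A : Set V) ⊆ U) (hA' : (A' : Set V) ⊆ U)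
    (hAsub : A ⊆ OLDV) (habs : ∀ v ∈ OLDV, K v ⊆ OLDV ∪ A') :
    (∀ v ∈ OLDV, v ∉ σ.C A' hA') ∧ σ.C A' hA' ⊆ σ.C A hA := by
  classical
  set BIG : Finset V := A ∪ A' ∪ OLDV.biUnion K with hBIG
  have hBIGU : (BIG : Set V) ⊆ U := by
    intro a ha
    simp only [hBIG, Finset.coe_union, Set.mem_union, Finset.coe_biUnion, Set.mem_iUnion,
      Finset.mem_coe] at ha
    rcases ha with (h | h) | h
    · exact hA h
    · exact hA' h
    · obtain ⟨y, _, hy⟩ := h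
      exact hKU y hy
  obtain ⟨c, hcBIG⟩ := σ.cne BIG hBIGU
  have hcKA : ∀ v ∈ OLDV, c ∈ σ.C (K v ∪ A') (union_subU (hKU v) hA') := by
    intro v hv
    refine σ.cmono _ BIG _ hBIGU ?_ hcBIG
    intro a ha
    rcases Finset.mem_union.mp ha with h | h
    · exact Finset.mem_union_right _ (Finset.mem_biUnion.mpr ⟨v, hv, h⟩)
    · exact Finset.mem_union_left _ (Finset.mem_union_right _ h)
  have hcA' : c ∈ σ.C A' hA' := by
    refine σ.cmono A' BIG hA' hBIGU ?_ hcBIG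
    intro a ha
    exact Finset.mem_union_left _ (Finset.mem_union_right _ ha)
  have hstar : ∀ v ∈ OLDV, v ∉ σ.C A' hA' := by
    intro v hv hvc
    obtain ⟨w, hw⟩ := σ.creach A' hA' v c hvc hcA'
    exact b2_descent σ K hKU hKv hKdead OLDV A' hA' habs c hcKA w.length v hv w hw le_rfl
  refine ⟨hstar, ?_⟩
  have hcA : c ∈ σ.C A hA := by
    refine σ.cmono A BIG hA hBIGU ?_ hcBIG
    intro a ha
    exact Finset.mem_union_left _ (Finset.mem_union_left _ ha)
  intro y hy
  obtain ⟨w, hw⟩ := σ.creach A' hA' y c hy hcA'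
  have hwA : ∀ z ∈ w.support, z ∉ (A : Set V) ∪ σ.D := by
    intro z hz
    have hzc : z ∈ σ.C A' hA' :=
      σ.cclosed A' hA' y z hy (reach_of_mem_support w hw hz)
    rintro (h | h)
    · exact hstar z (hAsub (Finset.mem_coe.mp h)) hzc
    · exact σ.cnm A' hA' z hzc (Or.inr h)
  exact σ.cclosed A hA c y hcA (ReachAvoiding.symm ⟨w, hwA⟩)

/-- One stage of the kill-cascade construction. -/
structure B2Rec (σ : CompFam G U) where
  A : Finset V
  hA : (A : Set V) ⊆ U
  x : V
  OLDV : Finset V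
  seg : List V
  xp : V
  Aprev : Finset V
  hAprev : (Aprev : Set V) ⊆ U
  hx : x ∈ σ.C A hA
  hAsub : A ⊆ OLDV
  hsegOLD : ∀ y ∈ seg, y ∈ OLDV
  hsegne : seg ≠ []
  hseghead : seg.head hsegne = xp
  hseglast : seg.getLast hsegne = x
  hsegchain : seg.Chain' G.Adj
  hsegmem : ∀ y ∈ seg, y ∈ σ.C Aprev hAprev

variable {σ} {K} in
/-- The new deleted set at the next stage: all kills of the old vertices, pruned. -/
noncomputable def b2A' (r : B2Rec σ) : Finset V := by
  classical
  exact (r.OLDV.biUnion K) \ r.OLDV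

variable {σ} {K} in
include hKU in
theorem b2A'_subU (r : B2Rec σ) : ((b2A' (K := K) r : Finset V) : Set V) ⊆ U := by
  classical
  intro a ha
  simp only [b2A', Finset.coe_sdiff, Set.mem_diff, Finset.mem_coe, Finset.mem_biUnion] at ha
  obtain ⟨⟨y, _, hy⟩, _⟩ := ha
  exact hKU y hy

variable {σ} {K} in
theorem b2A'_habs (r : B2Rec σ) : ∀ v ∈ r.OLDV, K v ⊆ r.OLDV ∪ b2A' (K := K) r := by
  classical
  intro v hv u hu
  by_cases h : u ∈ r.OLDV
  · exact Finset.mem_union_left _ h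
  · refine Finset.mem_union_right _ ?_
    simp only [b2A', Finset.mem_sdiff, Finset.mem_biUnion]
    exact ⟨⟨v, hv, hu⟩, h⟩

include hKv hKdead in
theorem b2_step_key (r : B2Rec σ) :
    (∀ v ∈ r.OLDV, v ∉ σ.C (b2A' (K := K) r) (b2A'_subU hKU r)) ∧
      σ.C (b2A' (K := K) r) (b2A'_subU hKU r) ⊆ σ.C r.A r.hA :=
  b2_key σ K hKU hKv hKdead r.OLDV r.A (b2A' (K := K) r) r.hA (b2A'_subU hKU r)
    r.hAsub (b2A'_habs r)

/-- The step of the cascade construction. -/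
noncomputable def b2step (r : B2Rec σ) : B2Rec σ := by
  classical
  refine
    let A' : Finset V := b2A' (K := K) r
    let hA' : (A' : Set V) ⊆ U := b2A'_subU hKU r
    let hx' : (σ.C A' hA').Nonempty := σ.cne A' hA'
    let x' : V := hx'.choose
    let hw : ReachAvoiding G ((r.A : Set V) ∪ σ.D) r.x x' := ?_
    let w := hw.choose
    { A := A', hA := hA', x := x', OLDV := r.OLDV ∪ A' ∪ w.support.toFinset,
      seg := w.support, xp := r.x,
      Aprev := r.A, hAprev := r.hA,
      hx := hx'.choose_spec,
      hAsub := by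
        intro a ha
        exact Finset.mem_union_left _ (Finset.mem_union_right _ ha),
      hsegOLD := by
        intro y hy
        exact Finset.mem_union_right _ (List.mem_toFinset.mpr hy),
      hsegne := SimpleGraph.Walk.support_ne_nil _,
      hseghead := SimpleGraph.Walk.head_support _,
      hseglast := SimpleGraph.Walk.getLast_support _,
      hsegchain := SimpleGraph.Walk.isChain_adj_support _,
      hsegmem := ?_ }
  · -- reach from r.x to x' within the component of r.A
    have hx2 : x' ∈ σ.C r.A r.hA :=
      (b2_step_key σ K hKU hKv hKdead r).2 hx'.choose_spec
    exact σ.creach r.A r.hA r.x x' r.hx hx2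
  · intro y hy
    exact σ.cclosed r.A r.hA r.x y r.hx (reach_of_mem_support _ hw.choose_spec hy)

/-- The base stage of the cascade construction. -/
noncomputable def b2base : B2Rec σ := by
  refine
    let hx0 : (σ.C ∅ (by simp)).Nonempty := σ.cne ∅ (by simp)
    let x0 : V := hx0.choose
    { A := ∅, hA := by simp, x := x0, OLDV := {x0}, seg := [x0], xp := x0,
      Aprev := ∅, hAprev := by simp,
      hx := hx0.choose_spec,
      hAsub := by simp,
      hsegOLD := by intro y hy; simp only [List.mem_singleton] at hy; simp [hy],
      hsegne := by simp,
      hseghead := rfl,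
      hseglast := rfl,
      hsegchain := List.isChain_singleton _,
      hsegmem := ?_ }
  intro y hy
  simp only [List.mem_singleton] at hy
  subst hy
  exact hx0.choose_spec

/-- The sequence of cascade stages. -/
noncomputable def b2seq : ℕ → B2Rec σ
  | 0 => b2base σ
  | m + 1 => b2step σ K hKU hKv hKdead (b2seq m)

theorem b2seq_succ (m : ℕ) : b2seq σ K hKU hKv hKdead (m + 1) =
    b2step σ K hKU hKv hKdead (b2seq σ K hKU hKv hKdead m) := rfl

theorem b2_A_succ (m : ℕ) : (b2seq σ K hKU hKv hKdead (m + 1)).A =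
    b2A' (K := K) (b2seq σ K hKU hKv hKdead m) := rfl

theorem b2_Aprev_succ (m : ℕ) : (b2seq σ K hKU hKv hKdead (m + 1)).Aprev =
    (b2seq σ K hKU hKv hKdead m).A := rfl

theorem b2_xp_succ (m : ℕ) : (b2seq σ K hKU hKv hKdead (m + 1)).xp =
    (b2seq σ K hKU hKv hKdead m).x := rfl

/-- Old vertices are dead at all later stages. -/
theorem b2_star (m : ℕ) : ∀ v ∈ (b2seq σ K hKU hKv hKdead m).OLDV,
    v ∉ σ.C (b2seq σ K hKU hKv hKdead (m + 1)).A (b2seq σ K hKU hKv hKdead (m + 1)).hA := by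
  intro v hv
  have h1 := (b2_step_key σ K hKU hKv hKdead (b2seq σ K hKU hKv hKdead m)).1 v hv
  have heq : σ.C (b2seq σ K hKU hKv hKdead (m + 1)).A (b2seq σ K hKU hKv hKdead (m + 1)).hA =
      σ.C (b2A' (K := K) (b2seq σ K hKU hKv hKdead m))
        (b2A'_subU hKU (b2seq σ K hKU hKv hKdead m)) :=
    cfam_congr σ rfl _ _
  rw [heq]
  exact h1

/-- Components decrease along the cascade. -/
theorem b2_comp_mono_succ (m : ℕ) :
    σ.C (b2seq σ K hKU hKv hKdead (m + 1)).A (b2seq σ K hKU hKv hKdead (m + 1)).hA ⊆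
      σ.C (b2seq σ K hKU hKv hKdead m).A (b2seq σ K hKU hKv hKdead m).hA := by
  have := (b2_step_key σ K hKU hKv hKdead (b2seq σ K hKU hKv hKdead m)).2
  exact this

theorem b2_comp_mono {m m' : ℕ} (h : m ≤ m') :
    σ.C (b2seq σ K hKU hKv hKdead m').A (b2seq σ K hKU hKv hKdead m').hA ⊆
      σ.C (b2seq σ K hKU hKv hKdead m).A (b2seq σ K hKU hKv hKdead m).hA := by
  induction m', h using Nat.le_induction with
  | base => exact le_rfl
  | succ m' hmm' ih => exact (b2_comp_mono_succ σ K hKU hKv hKdead m').trans ih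

theorem b2_dead {m j : ℕ} (hmj : m + 1 ≤ j) {y : V}
    (hy : y ∈ (b2seq σ K hKU hKv hKdead m).OLDV) :
    y ∉ σ.C (b2seq σ K hKU hKv hKdead j).A (b2seq σ K hKU hKv hKdead j).hA := by
  intro hyc
  have h1 : y ∈ σ.C (b2seq σ K hKU hKv hKdead (m + 1)).A (b2seq σ K hKU hKv hKdead (m + 1)).hA :=
    b2_comp_mono σ K hKU hKv hKdead hmj hyc
  exact b2_star σ K hKU hKv hKdead m y hy h1

/-- The new deleted sets are disjoint from all older ones. -/
theorem b2_A_disj (m : ℕ) :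
    ∀ a ∈ (b2seq σ K hKU hKv hKdead (m + 1)).A, a ∉ (b2seq σ K hKU hKv hKdead m).OLDV := by
  classical
  intro a ha
  rw [b2_A_succ] at ha
  simp only [b2A', Finset.mem_sdiff] at ha
  exact ha.2

include K hKU hKv hKdead in
/-- Main conclusion of the cascade construction: a ray whose tails follow `σ`. -/
theorem exists_ray_of_kills :
    ∃ r : GraphRay G, ∀ (F : Finset V) (hF : (F : Set V) ⊆ U),
      ∃ k, (∀ n, k ≤ n → r.toFun n ∉ (F : Set V)) ∧ r.toFun k ∈ σ.C F hF := by
  classical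
  set Ls : ℕ → List V := fun m => (b2seq σ K hKU hKv hKdead (m + 1)).seg with hLs
  set Sq : ℕ → B2Rec σ := b2seq σ K hKU hKv hKdead with hSq
  have hne : ∀ m, Ls m ≠ [] := fun m => (Sq (m + 1)).hsegne
  have hchain : ∀ m, (Ls m).Chain' G.Adj := fun m => (Sq (m + 1)).hsegchain
  have hglue : ∀ m, (Ls m).getLast (hne m) = (Ls (m + 1)).head (hne (m + 1)) := by
    intro m
    have h1 : (Ls m).getLast (hne m) = (Sq (m + 1)).x := (Sq (m + 1)).hseglast
    have h2 : (Ls (m + 1)).head (hne (m + 1)) = (Sq (m + 2)).xp := (Sq (m + 2)).hseghead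
    rw [h1, h2, hSq, b2_xp_succ]
  have hsegsub : ∀ j, ∀ y ∈ Ls j, y ∈ σ.C (Sq j).A (Sq j).hA := by
    intro j y hy
    have h1 := (Sq (j + 1)).hsegmem y hy
    rwa [cfam_congr σ (b2_Aprev_succ σ K hKU hKv hKdead j) _ _] at h1
  have hvan : ∀ v : V, ∃ M, ∀ m, M ≤ m → v ∉ Ls m := by
    intro v
    by_cases h : ∃ m, v ∈ Ls m
    · obtain ⟨m₀, hm₀⟩ := h
      refine ⟨m₀ + 2, fun m hm hvm => ?_⟩
      have hOLD : v ∈ (Sq (m₀ + 1)).OLDV := (Sq (m₀ + 1)).hsegOLD v hm₀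
      have hdead := b2_dead σ K hKU hKv hKdead (show m₀ + 1 + 1 ≤ m by omega) hOLD
      exact hdead (hsegsub m v hvm)
    · push_neg at h
      exact ⟨0, fun m _ => h m⟩
  refine ⟨exRay Ls hne hchain hglue hvan, ?_⟩
  intro F hF
  by_cases hgood : ∃ m, ∀ f ∈ F, f ∉ σ.C (Sq m).A (Sq m).hA
  · -- good case: the component eventually avoids F entirely
    obtain ⟨m, hm⟩ := hgood
    have hdisj : ∀ v ∈ σ.C (Sq m).A (Sq m).hA, v ∉ (F : Set V) := by
      intro v hv hvF
      exact hm v (Finset.mem_coe.mp hvF) hv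
    have hsub : σ.C (Sq m).A (Sq m).hA ⊆ σ.C F hF :=
      cfam_subset_of_disjoint σ hdisj
    have htail : ∀ n, stTau Ls m ≤ n →
        stW Ls hne (exT Ls hne hvan n) ∈ σ.C (Sq m).A (Sq m).hA := by
      intro n hn
      have ht : stTau Ls m ≤ exT Ls hne hvan n := le_trans hn (exT_ge Ls hne hvan n)
      have hst : m ≤ (stPos Ls (exT Ls hne hvan n)).1 := stage_ge_of_ge_tau Ls hne m _ ht
      have hmem := stW_mem Ls hne (exT Ls hne hvan n)
      have h1 : stW Ls hne (exT Ls hne hvan n) ∈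
          σ.C (Sq ((stPos Ls (exT Ls hne hvan n)).1)).A
            (Sq ((stPos Ls (exT Ls hne hvan n)).1)).hA :=
        hsegsub _ _ hmem
      exact b2_comp_mono σ K hKU hKv hKdead hst h1
    refine ⟨stTau Ls m, ?_, ?_⟩
    · intro n hn
      exact hdisj _ (htail n hn)
    · exact hsub (htail _ le_rfl)
  · -- bad case: impossible
    exfalso
    push_neg at hgood
    -- a junction vertex lies in every component
    have hjunction : ∃ v ∈ F, ∀ m, v ∈ σ.C (Sq m).A (Sq m).hA := by
      by_contra hc
      push_neg at hc
      have hout : ∀ v ∈ F, ∃ m, v ∉ σ.C (Sq m).A (Sq m).hA := by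
        intro v hv
        obtain ⟨m, hm⟩ := hc v hv
        exact ⟨m, hm⟩
      choose! g hg using hout
      obtain ⟨f, hf, hfc⟩ := hgood (F.sup g)
      exact hg f hf (b2_comp_mono σ K hKU hKv hKdead (Finset.le_sup hf) hfc)
    obtain ⟨v, hvF, hv⟩ := hjunction
    -- the path from the junction to a dying vertex
    set d : V := (Sq 1).x with hd
    have hd1 : d ∈ σ.C (Sq 1).A (Sq 1).hA := (Sq 1).hx
    have hdOLD : d ∈ (Sq 2).OLDV := by
      refine (Sq 2).hsegOLD d ?_
      have : (Sq 2).seg.head (Sq 2).hsegne = (Sq 2).xp := (Sq 2).hseghead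
      have hxp : (Sq 2).xp = d := by rw [hSq, b2_xp_succ]
      rw [← hxp, ← this]
      exact List.head_mem _
    have hddead : ∀ j, 3 ≤ j → d ∉ σ.C (Sq j).A (Sq j).hA := by
      intro j hj
      exact b2_dead σ K hKU hKv hKdead (show 2 + 1 ≤ j by omega) hdOLD
    obtain ⟨w, hw⟩ := σ.creach (Sq 1).A (Sq 1).hA v d (hv 1) hd1
    set p : List V := w.support with hp
    have hpne : p ≠ [] := SimpleGraph.Walk.support_ne_nil _
    set q : ℕ → V := fun i => p.getD i d with hq
    set N : ℕ := p.length - 1 with hN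
    have hlenpos : 0 < p.length := List.length_pos_iff.mpr hpne
    have hq0 : q 0 = v := by
      rw [hq]
      simp only
      rw [List.getD_eq_getElem p d (by omega)]
      have := List.head_eq_getElem_zero hpne
      rw [← this]
      exact (SimpleGraph.Walk.head_support w)
    have hqN : q N = d := by
      rw [hq]
      simp only
      have e1 : p.getD N d = p.getD (p.length - 1) d := by rw [hN]
      rw [e1, List.getD_eq_getElem p d (by omega)]
      have e2 := (List.getLast_eq_getElem hpne).symm
      rw [e2]
      exact (SimpleGraph.Walk.getLast_support w)
    -- q avoids D
    have hqD : ∀ i, i < p.length → q i ∉ σ.D := by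
      intro i hi
      have hqi : q i ∈ p := by
        rw [hq]
        simp only
        rw [List.getD_eq_getElem p d hi]
        exact List.getElem_mem _
      exact fun hD => hw _ hqi (Or.inr hD)
    -- least escape index for each stage
    have hex : ∀ m, 3 ≤ m → ∃ i, q i ∉ σ.C (Sq m).A (Sq m).hA := by
      intro m hm
      exact ⟨N, by rw [hqN]; exact hddead m hm⟩
    set Pm : ℕ → ℕ → Prop := fun m i => q i ∉ σ.C (Sq m).A (Sq m).hA with hPm
    have hdecP : ∀ m i, Decidable (Pm m i) := fun m i => Classical.dec _
    set idx : ℕ → ℕ := fun m =>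
      if hm : 3 ≤ m then @Nat.find _ (fun i => hdecP m i) (hex m hm) else 0 with hidx
    have hidx_spec : ∀ m, 3 ≤ m → Pm m (idx m) := by
      intro m hm
      rw [hidx]
      simp only [dif_pos hm]
      exact @Nat.find_spec _ (fun i => hdecP m i) (hex m hm)
    have hidx_min : ∀ m, 3 ≤ m → ∀ i, i < idx m → ¬ Pm m i := by
      intro m hm i hi
      rw [hidx] at hi
      simp only [dif_pos hm] at hi
      exact @Nat.find_min _ (fun i => hdecP m i) (hex m hm) _ hi
    have hidx_le : ∀ m (hm : 3 ≤ m) (i : ℕ), Pm m i → idx m ≤ i := by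
      intro m hm i hi
      rw [hidx]
      simp only [dif_pos hm]
      exact @Nat.find_le _ _ (fun i => hdecP m i) (hex m hm) hi
    have hidx_pos : ∀ m, 3 ≤ m → 0 < idx m := by
      intro m hm
      rcases Nat.eq_zero_or_pos (idx m) with h0 | h0
      · exfalso
        have h1 := hidx_spec m hm
        rw [h0] at h1
        have h2 : q 0 ∈ σ.C (Sq m).A (Sq m).hA := by rw [hq0]; exact hv m
        exact h1 h2
      · exact h0
    have hidx_anti : ∀ m m', 3 ≤ m → m ≤ m' → idx m' ≤ idx m := by
      intro m m' hm hmm'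
      refine hidx_le m' (by omega) _ ?_
      have h1 := hidx_spec m hm
      rw [hPm] at h1 ⊢
      intro hc
      exact h1 (b2_comp_mono σ K hKU hKv hKdead hmm' hc)
    -- stabilization of the escape index
    have hrange : (Set.range fun m => idx (m + 3)).Nonempty := ⟨idx 3, 0, rfl⟩
    obtain ⟨m₁, hm₁⟩ := Nat.sInf_mem hrange
    have hm₁' : idx (m₁ + 3) = sInf (Set.range fun m => idx (m + 3)) := hm₁
    have hstab : ∀ m, m₁ + 3 ≤ m → idx m = idx (m₁ + 3) := by
      intro m hm
      have h1 : idx m ≤ idx (m₁ + 3) := hidx_anti (m₁ + 3) m (by omega) hm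
      have h2 : idx (m₁ + 3) ≤ idx m := by
        rw [hm₁']
        refine Nat.sInf_le ⟨m - 3, ?_⟩
        show idx (m - 3 + 3) = idx m
        congr 1
        omega
      omega
    set b : ℕ := idx (m₁ + 3) with hb
    set mstar : ℕ := m₁ + 3 with hmstar
    have hbpos : 0 < b := by
      rw [← hstab mstar le_rfl]
      exact hidx_pos mstar (by omega)
    have hbN : b ≤ N := by
      rw [← hstab mstar le_rfl]
      refine hidx_le mstar (by omega) N ?_
      rw [hPm]
      simp only
      rw [hqN]
      exact hddead mstar (by omega)
    -- the two adjacent vertices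
    have hblen : b < p.length := by omega
    have hb1len : b - 1 < p.length := by omega
    have hadj : G.Adj (q (b - 1)) (q b) := by
      have hchainp : p.Chain' G.Adj := SimpleGraph.Walk.isChain_adj_support w
      have := (List.isChain_iff_getElem.mp hchainp) (b - 1) (by omega)
      have e1 : q (b - 1) = p.get ⟨b - 1, by omega⟩ := by
        rw [hq]; simp only
        rw [List.getD_eq_getElem p d hb1len]
        simp [List.get_eq_getElem]
      have e2 : q b = p.get ⟨b - 1 + 1, by omega⟩ := by
        rw [hq]; simp only
        rw [List.getD_eq_getElem p d hblen]
        simp only [List.get_eq_getElem]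
        congr 1
        omega
      rw [e1, e2]
      exact this
    -- for all m ≥ mstar, q b is deleted
    have hmemA : ∀ m, mstar ≤ m → q b ∈ (Sq m).A := by
      intro m hm
      by_contra hnA
      have hvstar : q (b - 1) ∈ σ.C (Sq m).A (Sq m).hA := by
        by_contra hc
        have := hidx_le m (by omega) (b - 1) hc
        rw [hstab m hm] at this
        omega
      have hqb : q b ∈ σ.C (Sq m).A (Sq m).hA := by
        refine cfam_adj_closed σ hvstar hadj ?_
        rintro (h | h)
        · exact hnA (Finset.mem_coe.mp h)
        · exact hqD b hblen h
      have h1 := hidx_spec m (by omega)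
      rw [hstab m hm] at h1
      exact h1 hqb
    -- contradiction with disjointness
    have h1 : q b ∈ (Sq (mstar + 1)).A := hmemA (mstar + 1) (by omega)
    have h2 : q b ∈ (Sq mstar).A := hmemA mstar le_rfl
    have h3 : q b ∉ (Sq mstar).OLDV := by
      have := b2_A_disj σ K hKU hKv hKdead mstar (q b) h1
      exact this
    exact h3 ((Sq mstar).hAsub h2)

end B2

section Final

variable (G) (U)

/-- Surjectivity of `ρ_•`. -/
theorem rhoMap_surjective (hbd : timidBoundary G U ⊆ U) :
    Function.Surjective (rhoMap G U) := by
  classical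
  intro ρ
  suffices h : ∃ r : GraphRay G, rayDirection G U r = ρ by
    obtain ⟨r, hr⟩ := h
    exact ⟨Quot.mk _ r, hr⟩
  by_cases hA : ∃ x : V, x ∉ U ∧ Loyal G U ρ x
  · obtain ⟨x, hxU, hx⟩ := hA
    exact exists_ray_of_loyal_not_mem ρ hbd hxU hx
  · push_neg at hA
    have hLU : ∀ x : V, Loyal G U ρ x → x ∈ U := by
      intro x hx
      by_contra hxU
      exact hA x hxU hx
    by_cases hLinf : {x : V | Loyal G U ρ x}.Infinite
    · exact exists_ray_of_loyal_infinite ρ hLU hLinf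
    · -- finitely many loyal vertices: delete them all and run the cascade
      have hLfin : {x : V | Loyal G U ρ x}.Finite := Set.not_infinite.mp hLinf
      set L : Finset V := hLfin.toFinset with hL
      have hLsub : (L : Set V) ⊆ U := by
        intro a ha
        rw [hL] at ha
        simp only [Finset.mem_coe, Set.Finite.mem_toFinset] at ha
        exact hLU a ha
      -- the deleted component family
      set σ : CompFam G U :=
        { C := fun F hF => ρ.comp (F ∪ L) (union_subU hF hLsub),
          D := (L : Set V),
          cne := fun F hF => (ρ.infinite (F ∪ L) (union_subU hF hLsub)).nonempty,
          cmono := fun F F' hF hF' hFF' =>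
            ρ.mono (F ∪ L) (F' ∪ L) _ _ (Finset.union_subset_union hFF' le_rfl),
          cnm := by
            intro F hF u hu hmem
            have h1 : u ∉ ((F ∪ L : Finset V) : Set V) := comp_not_mem ρ hu
            refine h1 ?_
            rw [Finset.coe_union]
            exact hmem,
          creach := by
            intro F hF u v hu hv
            have h1 := comp_reach ρ hu hv
            rwa [Finset.coe_union] at h1,
          cclosed := by
            intro F hF u v hu hre
            refine comp_closed ρ hu ?_
            rwa [Finset.coe_union] } with hσdef
      -- kill sets for σ
      have hkill : ∀ v : V, ∃ Kv : Finset V, ((Kv : Finset V) : Set V) ⊆ U ∧ v ∉ Kv ∧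
          ∀ (hKvU : ((Kv : Finset V) : Set V) ⊆ U), v ∉ σ.C Kv hKvU := by
        intro v
        by_cases hv : Loyal G U ρ v
        · refine ⟨∅, by simp, Finset.notMem_empty _, fun hKvU hcon => ?_⟩
          have hvL : v ∈ (∅ ∪ L : Finset V) := by
            refine Finset.mem_union_right _ ?_
            rw [hL]
            simp only [Set.Finite.mem_toFinset]
            exact hv
          exact comp_not_mem ρ hcon (Finset.mem_coe.mpr hvL)
        · obtain ⟨F₀, hF₀U, hvF₀, hdead⟩ := exists_kill_of_not_loyal ρ hv
          refine ⟨F₀, hF₀U, fun hmem => hvF₀ (Finset.mem_coe.mpr hmem), fun hKvU hcon => ?_⟩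
          exact hdead (F₀ ∪ L) (union_subU hF₀U hLsub) Finset.subset_union_left hcon
      choose K hKU hKv hKdead' using hkill
      have hKdead : ∀ v : V, v ∉ σ.C (K v) (hKU v) := fun v => hKdead' v (hKU v)
      obtain ⟨r, hr⟩ := exists_ray_of_kills σ K hKU hKv hKdead
      refine ⟨r, rayDirection_eq_of_criterion ρ r ?_⟩
      intro F hF
      obtain ⟨k, hk, hkc⟩ := hr F hF
      refine ⟨k, hk, ?_⟩
      have heq : σ.C F hF = ρ.comp (F ∪ L) (union_subU hF hLsub) := rfl
      rw [heq] at hkc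
      exact ρ.mono F (F ∪ L) hF _ Finset.subset_union_left hkc

/-- Two rays with the same direction have connected tails w.r.t. any finite `F ⊆ U`. -/
theorem tailsConnected_of_comp_eq {r r' : GraphRay G} (F : Finset V) (hF : (F : Set V) ⊆ U)
    (h : (rayDirection G U r).comp F hF = (rayDirection G U r').comp F hF) :
    TailsConnected G (F : Set V) r.toFun r'.toFun := by
  obtain ⟨k', hk'⟩ := r'.exists_tail_avoid F
  have hmem : r'.toFun k' ∈ (rayDirection G U r').comp F hF :=
    ⟨k', hk', ReachAvoiding.refl (hk' k' le_rfl)⟩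
  rw [← h] at hmem
  obtain ⟨k, hk, hre⟩ := hmem
  exact ⟨k, k', hk, hk', hre⟩

/-- Conversely, connected tails give equal components. -/
theorem comp_eq_of_tailsConnected {r r' : GraphRay G} (F : Finset V) (hF : (F : Set V) ⊆ U)
    (h : TailsConnected G (F : Set V) r.toFun r'.toFun) :
    (rayDirection G U r).comp F hF = (rayDirection G U r').comp F hF := by
  obtain ⟨k, k', hk, hk', hre⟩ := h
  have h1 : r.toFun k ∈ (rayDirection G U r).comp F hF :=
    ⟨k, hk, ReachAvoiding.refl (hk k le_rfl)⟩
  have h2 : r'.toFun k' ∈ (rayDirection G U r').comp F hF :=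
    ⟨k', hk', ReachAvoiding.refl (hk' k' le_rfl)⟩
  have h3 : r'.toFun k' ∈ (rayDirection G U r).comp F hF := ⟨k, hk, hre⟩
  rw [comp_eq_reach (rayDirection G U r) h3, comp_eq_reach (rayDirection G U r') h2]

theorem rhoMap_injective : Function.Injective (rhoMap G U) := by
  intro ξ ξ' h
  obtain ⟨r, rfl⟩ := Quot.exists_rep ξ
  obtain ⟨r', rfl⟩ := Quot.exists_rep ξ'
  apply Quot.sound
  intro F hF
  have hcomp : (rayDirection G U r).comp F hF = (rayDirection G U r').comp F hF :=
    congrArg (fun d : UDirection G U => d.comp F hF) h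
  exact tailsConnected_of_comp_eq G U F hF hcomp

theorem mem_uBasic_self (F : Finset V) (ξ : OmegaU G U) : ξ ∈ uBasic G U F ξ := by
  obtain ⟨r, rfl⟩ := Quot.exists_rep ξ
  obtain ⟨k, hk⟩ := r.exists_tail_avoid F
  exact ⟨r, r, rfl, rfl, k, k, hk, hk, ReachAvoiding.refl (hk k le_rfl)⟩

theorem rhoMap_quot (r : GraphRay G) : rhoMap G U (Quot.mk _ r) = rayDirection G U r := rfl

theorem isOpen_uBasic (F : Finset V) (hF : (F : Set V) ⊆ U) (ξ : OmegaU G U) :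
    IsOpen (uBasic G U F ξ) :=
  TopologicalSpace.isOpen_generateFrom_of_mem ⟨F, hF, ξ, rfl⟩

theorem rhoMap_continuous : Continuous (rhoMap G U) := by
  rw [continuous_generateFrom_iff]
  rintro s ⟨F, hF, ρ, rfl⟩
  have hpre : rhoMap G U ⁻¹' {ρ' : UDirection G U | ρ'.comp F hF = ρ.comp F hF} =
      ⋃₀ {t | ∃ ξ : OmegaU G U, (rhoMap G U ξ).comp F hF = ρ.comp F hF ∧ t = uBasic G U F ξ} := by
    ext ξ'
    constructor
    · intro hξ'
      exact ⟨uBasic G U F ξ', ⟨ξ', hξ', rfl⟩, mem_uBasic_self G U F ξ'⟩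
    · rintro ⟨t, ⟨ξ, hξ, rfl⟩, hξ't⟩
      obtain ⟨r, r', hr, hr', htc⟩ := hξ't
      have hcomp := comp_eq_of_tailsConnected G U F hF htc
      show (rhoMap G U ξ').comp F hF = ρ.comp F hF
      rw [← hr'] at *
      rw [rhoMap_quot] at *
      rw [← hcomp]
      rw [← hr] at hξ
      rw [rhoMap_quot] at hξ
      exact hξ
  rw [hpre]
  apply isOpen_sUnion
  rintro t ⟨ξ, _, rfl⟩
  exact isOpen_uBasic G U F hF ξ

theorem rhoMap_image_uBasic (hbd : timidBoundary G U ⊆ U) (F : Finset V)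
    (hF : (F : Set V) ⊆ U) (ε : OmegaU G U) :
    rhoMap G U '' uBasic G U F ε =
      {ρ' : UDirection G U | ρ'.comp F hF = (rhoMap G U ε).comp F hF} := by
  ext ρ'
  constructor
  · rintro ⟨ξ', hξ', rfl⟩
    obtain ⟨r, r', hr, hr', htc⟩ := hξ'
    have hcomp := comp_eq_of_tailsConnected G U F hF htc
    show (rhoMap G U ξ').comp F hF = (rhoMap G U ε).comp F hF
    rw [← hr', ← hr, rhoMap_quot, rhoMap_quot]
    exact hcomp.symm
  · intro hρ'
    obtain ⟨ξ', rfl⟩ := rhoMap_surjective G U hbd ρ'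
    obtain ⟨r', hr'⟩ := Quot.exists_rep ξ'
    obtain ⟨r, hr⟩ := Quot.exists_rep ε
    refine ⟨ξ', ⟨r, r', hr, hr', ?_⟩, rfl⟩
    refine tailsConnected_of_comp_eq G U F hF ?_
    have h1 : rhoMap G U ξ' = rayDirection G U r' := by rw [← hr', rhoMap_quot]
    have h2 : rhoMap G U ε = rayDirection G U r := by rw [← hr, rhoMap_quot]
    rw [← h1, ← h2]
    exact (hρ' : _ = _).symm

end Final

end RhoAux

/-- If `∂t_U ⊆ U`, then `ρ_• : Ω_U(G) → D_U(G)` is a homeomorphism. -/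
theorem rhoMap_isHomeomorph_of_timidBoundary_subset {V : Type*}
    (G : SimpleGraph V) (U : Set V) (h : timidBoundary G U ⊆ U) :
    IsHomeomorph (rhoMap G U) := by
  have hbij : Function.Bijective (rhoMap G U) :=
    ⟨RhoAux.rhoMap_injective G U, RhoAux.rhoMap_surjective G U h⟩
  set e := Equiv.ofBijective _ hbij with he
  rw [isHomeomorph_iff_exists_inverse]
  refine ⟨RhoAux.rhoMap_continuous G U, ⇑e.symm, e.left_inv, e.right_inv, ?_⟩
  rw [continuous_generateFrom_iff]
  rintro s ⟨F, hF, ε, rfl⟩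
  have him : ⇑e.symm ⁻¹' uBasic G U F ε = rhoMap G U '' uBasic G U F ε := by
    rw [← Equiv.image_eq_preimage_symm]
    rfl
  rw [him, RhoAux.rhoMap_image_uBasic G U h F hF ε]
  exact TopologicalSpace.isOpen_generateFrom_of_mem ⟨F, hF, rhoMap G U ε, rfl⟩
end

section
/- Let G = K ∪ S, where K is a complete graph on a countably infinite vertex set and S is a star of countably infinitely many rays whose center is a vertex v₀ ∈ V(K). Let r be a ray contained in K. Then t(G) = V(G) ∖ V(K), ∂t_{t(G)} ⊆ t(G), the singleton {[r]} equals the basic open set Ω({v₀}, [r]) and hence is open in Ω(G), yet its image {[r]_{t(G)}} under the canonical map π_Ω : Ω(G) → Ω_t(G), [s] ↦ [s]_{t(G)}, is not open in Ω_t(G): for every finite F ⊆ t(G), the basic open set Ω_t(F, [r]_{t(G)}) contains infinitely many timid-ends of rays of S. In particular, π_Ω is not an open map. -/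
open SimpleGraph

/-- The graph `K ∪ S`: a countably infinite clique `K` on the `Sum.inl` vertices together
with a star `S` of countably many rays (the `Sum.inr` vertices) whose center is the clique
vertex `v₀ = Sum.inl 0`: `inr (i, 0), inr (i, 1), …` is the `i`-th ray of the star, and
`inr (i, 0)` is adjacent to `v₀`. -/
def cliqueStar : SimpleGraph (ℕ ⊕ (ℕ × ℕ)) where
  Adj x y :=
    match x, y with
    | Sum.inl a, Sum.inl b => a ≠ b
    | Sum.inl a, Sum.inr p => a = 0 ∧ p.2 = 0
    | Sum.inr p, Sum.inl a => a = 0 ∧ p.2 = 0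
    | Sum.inr p, Sum.inr q => p.1 = q.1 ∧ (p.2 = q.2 + 1 ∨ q.2 = p.2 + 1)
  symm := by
    constructor
    rintro (a | p) (b | q) h
    · exact h.symm
    · exact h
    · exact h
    · exact ⟨h.1.symm, h.2.symm⟩
  loopless := by
    constructor
    rintro (a | p) h
    · exact h rfl
    · omega
/-- A ray lying inside the clique `K`. -/
def cliqueRay : GraphRay cliqueStar :=
  ⟨fun n => Sum.inl n, fun a b h => Sum.inl.inj h, fun n => Nat.ne_of_lt (Nat.lt_succ_self n)⟩

/-- The canonical map `π_Ω : Ω(G) → Ω_t(G)`, `[s] ↦ [s]_{t(G)}`. -/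
def piOmega {V : Type*} (G : SimpleGraph V) :
    OmegaU G (Set.univ : Set V) → OmegaU G (timidSet G) :=
  Quot.lift (fun r => Quot.mk (UEquiv G (timidSet G)) r)
    (fun _ _ h => Quot.sound (fun F _ => h F (Set.subset_univ _)))

section Helpers

variable {V : Type*} {G : SimpleGraph V}

lemma reachAvoiding_symm {F : Set V} {u v : V} (h : ReachAvoiding G F u v) :
    ReachAvoiding G F v u := by
  obtain ⟨w, hw⟩ := h
  exact ⟨w.reverse, fun x hx => hw x (by simpa [SimpleGraph.Walk.support_reverse] using hx)⟩

lemma reachAvoiding_trans {F : Set V} {u v w : V} (h1 : ReachAvoiding G F u v)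
    (h2 : ReachAvoiding G F v w) : ReachAvoiding G F u w := by
  obtain ⟨p, hp⟩ := h1
  obtain ⟨q, hq⟩ := h2
  refine ⟨p.append q, fun x hx => ?_⟩
  rcases (SimpleGraph.Walk.mem_support_append_iff p q).mp hx with h | h
  · exact hp x h
  · exact hq x h

lemma walk_closed {F C : Set V}
    (hC : ∀ x ∈ C, ∀ y, G.Adj x y → y ∉ F → y ∈ C) {u v : V} (w : G.Walk u v)
    (hw : ∀ x ∈ w.support, x ∉ F) (hu : u ∈ C) : v ∈ C := by
  induction w with
  | nil => exact hu
  | @cons a b c h p ih =>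
      refine ih (fun x hx => hw x ?_) (hC a hu b h (hw b ?_))
      · rw [SimpleGraph.Walk.support_cons]; exact List.mem_cons_of_mem _ hx
      · rw [SimpleGraph.Walk.support_cons]
        exact List.mem_cons_of_mem _ p.start_mem_support

lemma ray_walk (s : GraphRay G) {a b : ℕ} (hab : a ≤ b) :
    ∃ w : G.Walk (s.toFun a) (s.toFun b), ∀ x ∈ w.support, ∃ n, a ≤ n ∧ x = s.toFun n := by
  induction b, hab using Nat.le_induction with
  | base =>
      refine ⟨SimpleGraph.Walk.nil, fun x hx => ?_⟩
      rw [SimpleGraph.Walk.support_nil] at hx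
      simp at hx
      exact ⟨a, le_rfl, hx⟩
  | succ b hab ih =>
      obtain ⟨w, hw⟩ := ih
      refine ⟨w.append (SimpleGraph.Walk.cons (s.adj b) SimpleGraph.Walk.nil),
        fun x hx => ?_⟩
      rcases (SimpleGraph.Walk.mem_support_append_iff _ _).mp hx with h | h
      · exact hw x h
      · simp [SimpleGraph.Walk.support_cons] at h
        rcases h with h | h
        · exact ⟨b, by omega, h⟩
        · exact ⟨b + 1, by omega, h⟩

lemma ray_reach (s : GraphRay G) {F : Set V} {k k' : ℕ}
    (h1 : ∀ n, k ≤ n → s.toFun n ∉ F) (h2 : ∀ n, k' ≤ n → s.toFun n ∉ F) :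
    ReachAvoiding G F (s.toFun k) (s.toFun k') := by
  rcases le_total k k' with h | h
  · obtain ⟨w, hw⟩ := ray_walk s h
    refine ⟨w, fun x hx => ?_⟩
    obtain ⟨n, hn, rfl⟩ := hw x hx
    exact h1 n hn
  · obtain ⟨w, hw⟩ := ray_walk s h
    refine reachAvoiding_symm ⟨w, fun x hx => ?_⟩
    obtain ⟨n, hn, rfl⟩ := hw x hx
    exact h2 n hn

lemma tailsConnected_trans {F : Set V} {r u : ℕ → V} (s : GraphRay G)
    (h1 : TailsConnected G F r s.toFun) (h2 : TailsConnected G F s.toFun u) :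
    TailsConnected G F r u := by
  obtain ⟨k1, k2, ha1, ha2, hR1⟩ := h1
  obtain ⟨k3, k4, ha3, ha4, hR2⟩ := h2
  exact ⟨k1, k4, ha1, ha4,
    reachAvoiding_trans hR1 (reachAvoiding_trans (ray_reach s ha2 ha3) hR2)⟩

lemma tail_avoids (g : ℕ → V) (hg : Function.Injective g) (F : Set V) (hF : F.Finite) :
    ∃ N, ∀ n, N ≤ n → g n ∉ F := by
  have h : (g ⁻¹' F).Finite := Set.Finite.preimage (Function.Injective.injOn hg) hF
  obtain ⟨N, hN⟩ := h.bddAbove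
  exact ⟨N + 1, fun n hn hmem => by have := hN hmem; omega⟩

lemma uEquiv_equivalence (U : Set V) : Equivalence (UEquiv G U) := by
  constructor
  · intro s F _
    obtain ⟨N, hN⟩ := tail_avoids s.toFun s.injective F F.finite_toSet
    refine ⟨N, N, hN, hN, SimpleGraph.Walk.nil, fun x hx => ?_⟩
    rw [SimpleGraph.Walk.support_nil] at hx
    simp at hx
    subst hx
    exact hN N le_rfl
  · intro x y h F hF
    obtain ⟨k, k', h1, h2, hR⟩ := h F hF
    exact ⟨k', k, h2, h1, reachAvoiding_symm hR⟩
  · intro x y z hxy hyz F hF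
    exact tailsConnected_trans y (hxy F hF) (hyz F hF)

lemma mk_eq_iff {U : Set V} {r r' : GraphRay G} :
    Quot.mk (UEquiv G U) r = Quot.mk (UEquiv G U) r' ↔ UEquiv G U r r' := by
  rw [Quot.eq]
  exact (uEquiv_equivalence U).eqvGen_iff

end Helpers

/-- The `i`-th ray of the star, as a `GraphRay`. -/
def starRay (i : ℕ) : GraphRay cliqueStar where
  toFun n := Sum.inr (i, n)
  injective a b h := by simpa using h
  adj n := ⟨rfl, Or.inr rfl⟩

lemma timid_eq_range : timidSet cliqueStar = Set.range Sum.inr := by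
  ext v
  constructor
  · intro hv
    rcases v with a | p
    · exfalso
      apply hv cliqueRay
      intro F hvF
      obtain ⟨N, hN⟩ := tail_avoids cliqueRay.toFun cliqueRay.injective (F : Set _)
        F.finite_toSet
      set m := max N (a + 1) with hm
      have hNm : N ≤ m := le_max_left _ _
      have ham : a ≠ m := by
        have := le_max_right N (a + 1); omega
      refine ⟨m, fun n hn => hN n (le_trans hNm hn), ?_⟩
      refine ⟨SimpleGraph.Walk.cons (show cliqueStar.Adj (Sum.inl a) (Sum.inl m) from ham)
        SimpleGraph.Walk.nil, fun x hx => ?_⟩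
      change x ∈ [Sum.inl a, Sum.inl m] at hx
      simp [SimpleGraph.Walk.support_cons] at hx
      rcases hx with rfl | rfl
      · exact fun hmem => hvF (by exact_mod_cast hmem)
      · exact hN m hNm
    · exact ⟨p, rfl⟩
  · rintro ⟨⟨i, n⟩, rfl⟩
    intro r hdom
    have hvF : (Sum.inr (i, n) : ℕ ⊕ (ℕ × ℕ)) ∉
        ({Sum.inl 0, Sum.inr (i, n + 1)} : Finset (ℕ ⊕ (ℕ × ℕ))) := by simp
    obtain ⟨k, htail, hreach⟩ := hdom {Sum.inl 0, Sum.inr (i, n + 1)} hvF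
    set C : Set (ℕ ⊕ (ℕ × ℕ)) := {x | ∃ m, m ≤ n ∧ x = Sum.inr (i, m)} with hCdef
    have hC : ∀ x ∈ C, ∀ y, cliqueStar.Adj x y →
        y ∉ ((({Sum.inl 0, Sum.inr (i, n + 1)} : Finset (ℕ ⊕ (ℕ × ℕ))) : Set _)) → y ∈ C := by
      rintro x ⟨m, hmn, rfl⟩ y hadj hy
      rcases y with b | ⟨j, m'⟩
      · obtain ⟨hb, -⟩ := hadj
        subst hb
        exact absurd (by simp) hy
      · obtain ⟨hj, hm'⟩ := hadj
        subst hj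
        rcases hm' with h | h
        · exact ⟨m', by omega, rfl⟩
        · rcases Nat.lt_or_ge m n with hlt | hge
          · exact ⟨m', by omega, rfl⟩
          · exfalso
            apply hy
            have : m' = n + 1 := by omega
            simp [this]
    have hall : ∀ j, r.toFun (k + j) ∈ C := by
      intro j
      induction j with
      | zero =>
          obtain ⟨w, hw⟩ := hreach
          exact walk_closed hC w hw ⟨n, le_rfl, rfl⟩
      | succ j ih =>
          exact hC _ ih _ (r.adj (k + j)) (htail (k + j + 1) (by omega))
    have hCfin : C.Finite := by
      have hsub : C ⊆ (fun m => (Sum.inr (i, m) : ℕ ⊕ (ℕ × ℕ))) '' Set.Iic n := by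
        rintro x ⟨m, hm, rfl⟩
        exact ⟨m, hm, rfl⟩
      exact ((Set.finite_Iic n).image _).subset hsub
    have hinj : Function.Injective (fun j => r.toFun (k + j)) := by
      intro a b h
      have := r.injective h
      omega
    exact Set.infinite_range_of_injective hinj
      (hCfin.subset (by rintro x ⟨j, rfl⟩; exact hall j))

lemma inl_not_mem_timid {F : Set (ℕ ⊕ (ℕ × ℕ))} (hF : F ⊆ Set.range Sum.inr) (a : ℕ) :
    (Sum.inl a : ℕ ⊕ (ℕ × ℕ)) ∉ F := by
  intro ha
  obtain ⟨p, hp⟩ := hF ha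
  simp at hp

lemma clique_star_conn {i : ℕ} {F : Set (ℕ ⊕ (ℕ × ℕ))} (hF : F ⊆ Set.range Sum.inr)
    (hi : ∀ m, Sum.inr (i, m) ∉ F) :
    TailsConnected cliqueStar F cliqueRay.toFun (starRay i).toFun := by
  refine ⟨0, 0, fun n _ => inl_not_mem_timid hF n, fun n _ => hi n, ?_⟩
  refine ⟨SimpleGraph.Walk.cons
    (show cliqueStar.Adj (Sum.inl 0) (Sum.inr (i, 0)) from ⟨rfl, rfl⟩)
    SimpleGraph.Walk.nil, fun x hx => ?_⟩
  change x ∈ [Sum.inl 0, Sum.inr (i, 0)] at hx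
  simp [SimpleGraph.Walk.support_cons] at hx
  rcases hx with rfl | rfl
  · exact inl_not_mem_timid hF 0
  · exact hi 0

lemma star_block {i : ℕ} {v : ℕ ⊕ (ℕ × ℕ)} {F : Set (ℕ ⊕ (ℕ × ℕ))}
    (hF : Sum.inr (i, 0) ∈ F) {k : ℕ} (hk : 1 ≤ k)
    (h : ReachAvoiding cliqueStar F (Sum.inr (i, k)) v) :
    ∃ m, 1 ≤ m ∧ v = Sum.inr (i, m) := by
  obtain ⟨w, hw⟩ := h
  refine walk_closed (C := {x | ∃ m, 1 ≤ m ∧ x = Sum.inr (i, m)}) ?_ w hw ⟨k, hk, rfl⟩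
  rintro x ⟨m, hm, rfl⟩ y hadj hy
  rcases y with b | ⟨j, m'⟩
  · exact absurd hadj.2 (by omega)
  · obtain ⟨hj, hm'⟩ := hadj
    subst hj
    refine ⟨m', ?_, rfl⟩
    rcases Nat.eq_zero_or_pos m' with h0 | h0
    · subst h0
      exact absurd hF hy
    · exact h0

lemma starRay_ne_clique (i : ℕ) :
    ¬ UEquiv cliqueStar (timidSet cliqueStar) (starRay i) cliqueRay := by
  intro h
  obtain ⟨k, k', h1, h2, hR⟩ := h {Sum.inr (i, 0)} (by rw [timid_eq_range]; simp)
  have hk : 1 ≤ k := by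
    by_contra hk
    push_neg at hk
    have := h1 0 (by omega)
    exact this (by simp [starRay])
  obtain ⟨m, -, hm⟩ := star_block (by simp) hk hR
  simp [cliqueRay] at hm

lemma starRay_inj {i j : ℕ}
    (h : UEquiv cliqueStar (timidSet cliqueStar) (starRay i) (starRay j)) : i = j := by
  obtain ⟨k, k', h1, h2, hR⟩ := h {Sum.inr (i, 0)} (by rw [timid_eq_range]; simp)
  have hk : 1 ≤ k := by
    by_contra hk
    push_neg at hk
    have := h1 0 (by omega)
    exact this (by simp [starRay])
  obtain ⟨m, -, hm⟩ := star_block (by simp) hk hR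
  simp [starRay] at hm
  exact hm.1.symm

lemma bad_finite (F : Finset (ℕ ⊕ (ℕ × ℕ))) :
    {i : ℕ | ∃ m, Sum.inr (i, m) ∈ (F : Set (ℕ ⊕ (ℕ × ℕ)))}.Finite := by
  apply Set.Finite.subset (F.finite_toSet.image
    (fun x => match x with | Sum.inl _ => 0 | Sum.inr p => p.1))
  rintro i ⟨m, hm⟩
  exact ⟨Sum.inr (i, m), hm, rfl⟩

lemma good_infinite (F : Finset (ℕ ⊕ (ℕ × ℕ))) :
    {i : ℕ | ∀ m, Sum.inr (i, m) ∉ (F : Set (ℕ ⊕ (ℕ × ℕ)))}.Infinite := by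
  have heq : {i : ℕ | ∀ m, Sum.inr (i, m) ∉ (F : Set (ℕ ⊕ (ℕ × ℕ)))} =
      {i : ℕ | ∃ m, Sum.inr (i, m) ∈ (F : Set (ℕ ⊕ (ℕ × ℕ)))}ᶜ := by
    ext i
    simp
  rw [heq]
  exact (bad_finite F).infinite_compl

/-- For `G = K ∪ S` (an infinite clique `K` with a star `S` of
infinitely many rays centered at `v₀ = Sum.inl 0 ∈ V(K)`) and a ray `r` inside `K`:
`t(G) = V(G) ∖ V(K)`, `∂t_{t(G)} ⊆ t(G)`, the singleton `{[r]}` is the basic open set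
`Ω({v₀}, [r])` and hence open in `Ω(G)`, yet its image `{[r]_{t(G)}}` under the canonical
map `π_Ω` is not open in `Ω_t(G)`, since every basic open set `Ω_t(F, [r]_{t(G)})` contains
infinitely many timid-ends of rays of `S`. In particular `π_Ω` is not an open map. -/
theorem cliqueStar_piOmega_not_openMap :
    timidSet cliqueStar = Set.range Sum.inr ∧
    timidBoundary cliqueStar (timidSet cliqueStar) ⊆ timidSet cliqueStar ∧
    uBasic cliqueStar (Set.univ : Set (ℕ ⊕ (ℕ × ℕ))) {Sum.inl 0}
        (Quot.mk (UEquiv cliqueStar Set.univ) cliqueRay) =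
      {Quot.mk (UEquiv cliqueStar Set.univ) cliqueRay} ∧
    IsOpen ({Quot.mk (UEquiv cliqueStar Set.univ) cliqueRay} :
      Set (OmegaU cliqueStar Set.univ)) ∧
    piOmega cliqueStar '' {Quot.mk (UEquiv cliqueStar Set.univ) cliqueRay} =
      {Quot.mk (UEquiv cliqueStar (timidSet cliqueStar)) cliqueRay} ∧
    (∀ F : Finset (ℕ ⊕ (ℕ × ℕ)), (F : Set (ℕ ⊕ (ℕ × ℕ))) ⊆ timidSet cliqueStar →
      {ξ | ξ ∈ uBasic cliqueStar (timidSet cliqueStar) F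
            (Quot.mk (UEquiv cliqueStar (timidSet cliqueStar)) cliqueRay) ∧
        ∃ s : GraphRay cliqueStar, (∀ n, ∃ p, s.toFun n = Sum.inr p) ∧
          Quot.mk (UEquiv cliqueStar (timidSet cliqueStar)) s = ξ}.Infinite) ∧
    ¬ IsOpen ({Quot.mk (UEquiv cliqueStar (timidSet cliqueStar)) cliqueRay} :
      Set (OmegaU cliqueStar (timidSet cliqueStar))) ∧
    ¬ IsOpenMap (piOmega cliqueStar) := by
  -- Part 2
  have h2 : timidBoundary cliqueStar (timidSet cliqueStar) ⊆ timidSet cliqueStar := by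
    rintro v ⟨hvt, -⟩
    rw [timid_eq_range]
    rcases v with a | p
    · exfalso
      obtain ⟨F, hF, hk⟩ := hvt cliqueRay
      have hFr : (F : Set (ℕ ⊕ (ℕ × ℕ))) ⊆ Set.range Sum.inr := by
        rw [timid_eq_range] at hF
        exact hF.trans Set.diff_subset
      refine hk a (fun n _ => inl_not_mem_timid hFr n) ?_
      refine ⟨SimpleGraph.Walk.nil, fun x hx => ?_⟩
      change x ∈ [Sum.inl a] at hx
      simp at hx
      subst hx
      exact inl_not_mem_timid hFr a
    · exact ⟨p, rfl⟩
  -- Part 3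
  have h3 : uBasic cliqueStar (Set.univ : Set (ℕ ⊕ (ℕ × ℕ))) {Sum.inl 0}
      (Quot.mk (UEquiv cliqueStar Set.univ) cliqueRay) =
      {Quot.mk (UEquiv cliqueStar Set.univ) cliqueRay} := by
    ext ξ
    constructor
    · rintro ⟨r1, r2, hq1, rfl, hT⟩
      refine Set.mem_singleton_iff.mpr (Quot.sound ?_)
      by_cases hcase : ∀ N, ∃ n, N ≤ n ∧ ∃ a, r2.toFun n = Sum.inl a
      · intro F _
        obtain ⟨N1, hN1⟩ := tail_avoids r2.toFun r2.injective _ F.finite_toSet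
        obtain ⟨n, hn, a, ha⟩ := hcase N1
        obtain ⟨N2, hN2⟩ := tail_avoids cliqueRay.toFun cliqueRay.injective _ F.finite_toSet
        set m := max N2 (a + 1) with hmdef
        have hN2m : N2 ≤ m := le_max_left _ _
        have ham : a ≠ m := by
          have := le_max_right N2 (a + 1); omega
        refine ⟨n, m, fun j hj => hN1 j (by omega), fun j hj => hN2 j (by omega), ?_⟩
        have hadj : cliqueStar.Adj (r2.toFun n) (Sum.inl m) := by
          rw [ha]; exact ham
        refine ⟨SimpleGraph.Walk.cons hadj SimpleGraph.Walk.nil, fun x hx => ?_⟩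
        change x ∈ [r2.toFun n, Sum.inl m] at hx
        simp [SimpleGraph.Walk.support_cons] at hx
        rcases hx with rfl | rfl
        · exact hN1 n hn
        · exact hN2 m hN2m
      · exfalso
        push_neg at hcase
        obtain ⟨N, hN⟩ := hcase
        have hinr : ∀ n, N ≤ n → ∃ p, r2.toFun n = Sum.inr p := by
          intro n hn
          rcases hrn : r2.toFun n with a | p
          · exact absurd hrn (hN n hn a)
          · exact ⟨p, rfl⟩
        obtain ⟨⟨i, n0⟩, hp0⟩ := hinr N le_rfl
        have hray : ∀ n, N ≤ n → ∃ m, r2.toFun n = Sum.inr (i, m) := by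
          intro n hn
          induction n, hn using Nat.le_induction with
          | base => exact ⟨n0, hp0⟩
          | succ n hn ih =>
              obtain ⟨m, hm⟩ := ih
              obtain ⟨⟨j, m'⟩, hq⟩ := hinr (n + 1) (by omega)
              have hadj := r2.adj n
              rw [hm, hq] at hadj
              obtain ⟨hj, -⟩ := hadj
              have hj' : i = j := hj
              exact ⟨m', by rw [hq, hj']⟩
        obtain ⟨k1, k2, hA1, hA2, hR⟩ := hT
        have h1' : UEquiv cliqueStar Set.univ r1 cliqueRay := mk_eq_iff.mp hq1
        obtain ⟨k3, k4, hB1, hB2, hR2⟩ := h1' {Sum.inl 0} (by simp)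
        have hk4 : k4 ≠ 0 := by
          intro h
          have := hB2 k4 le_rfl
          rw [h] at this
          simp [cliqueRay] at this
        set K := max k2 N with hKdef
        have hchain : ReachAvoiding cliqueStar
            (({Sum.inl 0} : Finset (ℕ ⊕ (ℕ × ℕ))) : Set (ℕ ⊕ (ℕ × ℕ)))
            (cliqueRay.toFun k4) (r2.toFun K) :=
          reachAvoiding_trans (reachAvoiding_symm hR2)
            (reachAvoiding_trans (ray_reach r1 hB1 hA1)
              (reachAvoiding_trans hR (ray_reach r2 hA2 (fun n hn => hA2 n (by omega)))))
        obtain ⟨m, hm⟩ := hray K (le_max_right _ _)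
        obtain ⟨w, hw⟩ := hchain
        have hclosed : ∀ x ∈ {x : ℕ ⊕ (ℕ × ℕ) | ∃ a, a ≠ 0 ∧ x = Sum.inl a}, ∀ y,
            cliqueStar.Adj x y →
            y ∉ (({Sum.inl 0} : Finset (ℕ ⊕ (ℕ × ℕ))) : Set (ℕ ⊕ (ℕ × ℕ))) →
            y ∈ {x : ℕ ⊕ (ℕ × ℕ) | ∃ a, a ≠ 0 ∧ x = Sum.inl a} := by
          rintro x ⟨a, ha, rfl⟩ y hadj hy
          rcases y with b | q
          · refine ⟨b, fun hb => hy ?_, rfl⟩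
            simp [hb]
          · exact absurd hadj.1 ha
        have hend := walk_closed hclosed w hw ⟨k4, hk4, rfl⟩
        rw [hm] at hend
        obtain ⟨a, -, haeq⟩ := hend
        simp at haeq
    · intro hξ
      replace hξ : ξ = Quot.mk (UEquiv cliqueStar Set.univ) cliqueRay := hξ
      subst hξ
      refine ⟨cliqueRay, cliqueRay, rfl, rfl, 1, 1, ?_, ?_, ?_⟩
      · intro n hn; simp [cliqueRay]; omega
      · intro n hn; simp [cliqueRay]; omega
      · refine ⟨SimpleGraph.Walk.nil, fun x hx => ?_⟩
        rw [SimpleGraph.Walk.support_nil] at hx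
        simp at hx
        subst hx
        simp [cliqueRay]
  -- Part 4
  have h4 : IsOpen ({Quot.mk (UEquiv cliqueStar Set.univ) cliqueRay} :
      Set (OmegaU cliqueStar Set.univ)) := by
    rw [← h3]
    exact TopologicalSpace.isOpen_generateFrom_of_mem
      ⟨{Sum.inl 0}, Set.subset_univ _, Quot.mk (UEquiv cliqueStar Set.univ) cliqueRay, rfl⟩
  -- Part 5
  have h5 : piOmega cliqueStar '' {Quot.mk (UEquiv cliqueStar Set.univ) cliqueRay} =
      {Quot.mk (UEquiv cliqueStar (timidSet cliqueStar)) cliqueRay} := by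
    refine Set.image_singleton.trans ?_
    rfl
  -- Part 6
  have h6 : ∀ F : Finset (ℕ ⊕ (ℕ × ℕ)), (F : Set (ℕ ⊕ (ℕ × ℕ))) ⊆ timidSet cliqueStar →
      {ξ | ξ ∈ uBasic cliqueStar (timidSet cliqueStar) F
            (Quot.mk (UEquiv cliqueStar (timidSet cliqueStar)) cliqueRay) ∧
        ∃ s : GraphRay cliqueStar, (∀ n, ∃ p, s.toFun n = Sum.inr p) ∧
          Quot.mk (UEquiv cliqueStar (timidSet cliqueStar)) s = ξ}.Infinite := by
    intro F hF
    have hFr : (F : Set (ℕ ⊕ (ℕ × ℕ))) ⊆ Set.range Sum.inr := by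
      rwa [timid_eq_range] at hF
    have hinf : ((fun i => Quot.mk (UEquiv cliqueStar (timidSet cliqueStar)) (starRay i)) ''
        {i : ℕ | ∀ m, Sum.inr (i, m) ∉ (F : Set (ℕ ⊕ (ℕ × ℕ)))}).Infinite :=
      (good_infinite F).image (fun a _ b _ hab => starRay_inj (mk_eq_iff.mp hab))
    refine Set.Infinite.mono ?_ hinf
    rintro ξ ⟨i, hi, rfl⟩
    exact ⟨⟨cliqueRay, starRay i, rfl, rfl, clique_star_conn hFr hi⟩,
      starRay i, fun n => ⟨(i, n), rfl⟩, rfl⟩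
  -- Part 7
  have key : ∀ U : Set (OmegaU cliqueStar (timidSet cliqueStar)),
      TopologicalSpace.GenerateOpen
        {S | ∃ F : Finset (ℕ ⊕ (ℕ × ℕ)), (F : Set (ℕ ⊕ (ℕ × ℕ))) ⊆ timidSet cliqueStar ∧
          ∃ ε, S = uBasic cliqueStar (timidSet cliqueStar) F ε} U →
      Quot.mk (UEquiv cliqueStar (timidSet cliqueStar)) cliqueRay ∈ U →
      {i : ℕ | Quot.mk (UEquiv cliqueStar (timidSet cliqueStar)) (starRay i) ∉ U}.Finite := by
    intro U hU
    induction hU with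
    | basic S hS =>
        intro hmem
        obtain ⟨F, hF, ε, rfl⟩ := hS
        obtain ⟨ra, rb, hra, hrb, hTab⟩ := hmem
        have hrb' : UEquiv cliqueStar (timidSet cliqueStar) rb cliqueRay := mk_eq_iff.mp hrb
        have hFr : (F : Set (ℕ ⊕ (ℕ × ℕ))) ⊆ Set.range Sum.inr := by
          rwa [timid_eq_range] at hF
        refine (bad_finite F).subset ?_
        intro i hi
        by_contra hbad
        simp only [Set.mem_setOf_eq, not_exists] at hbad
        apply hi
        exact ⟨ra, starRay i, hra, rfl,
          tailsConnected_trans rb hTab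
            (tailsConnected_trans cliqueRay (hrb' F hF) (clique_star_conn hFr hbad))⟩
    | univ =>
        intro _
        exact Set.Finite.subset Set.finite_empty fun i hi => absurd (Set.mem_univ _) hi
    | inter U V hUo hVo ihU ihV =>
        intro hmem
        refine ((ihU hmem.1).union (ihV hmem.2)).subset ?_
        intro i hi
        simp only [Set.mem_setOf_eq, Set.mem_inter_iff, not_and_or] at hi
        simp only [Set.mem_union, Set.mem_setOf_eq]
        exact not_and_or.mp hi
    | sUnion S hSo ih =>
        intro hmem
        obtain ⟨U, hUS, hmemU⟩ := hmem
        refine (ih U hUS hmemU).subset ?_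
        intro i hi hmemi
        exact hi ⟨U, hUS, hmemi⟩
  have h7 : ¬ IsOpen ({Quot.mk (UEquiv cliqueStar (timidSet cliqueStar)) cliqueRay} :
      Set (OmegaU cliqueStar (timidSet cliqueStar))) := by
    intro hopen
    have hfin := key _ hopen (Set.mem_singleton _)
    have huniv : {i : ℕ | Quot.mk (UEquiv cliqueStar (timidSet cliqueStar)) (starRay i) ∉
        ({Quot.mk (UEquiv cliqueStar (timidSet cliqueStar)) cliqueRay} :
          Set (OmegaU cliqueStar (timidSet cliqueStar)))} = Set.univ := by
      ext i
      simp only [Set.mem_setOf_eq, Set.mem_singleton_iff, Set.mem_univ, iff_true]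
      exact fun h => starRay_ne_clique i (mk_eq_iff.mp h)
    rw [huniv] at hfin
    exact Set.infinite_univ hfin
  refine ⟨timid_eq_range, h2, h3, h4, h5, h6, h7, ?_⟩
  intro hmap
  have himg := hmap _ h4
  rw [h5] at himg
  exact h7 himg
end
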